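/- Let S = (P, L) be a generalized quadrangle of order (2,4) and let (R, ψ) be a faithful representation of S. Then |R| = 2^6. -/

import Mathlib

open scoped Classical

/-- A slim partial linear space: a nonempty point set, a nonempty collection of
lines each of which is a 3-element set of points, such that any two distinct
points lie in at most one common line. -/
structure SlimPLS (P : Type*) where
  lines : Set (Finset P)
  nonempty_pts : Nonempty P
  nonempty_lines : lines.Nonempty
  three_points : ∀ l ∈ lines, l.card = 3
  unique_line : ∀ l₁ ∈ lines, ∀ l₂ ∈ lines, ∀ x y : P,
    x ≠ y → x ∈ l₁ → y ∈ l₁ → x ∈ l₂ → y ∈ l₂ → l₁ = l₂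

namespace SlimPLS

variable {P : Type*}

/-- Two points are collinear if they are distinct and lie on a common line. -/
def Collinear (S : SlimPLS P) (x y : P) : Prop :=
  x ≠ y ∧ ∃ l ∈ S.lines, x ∈ l ∧ y ∈ l

/-- The collinearity graph of a slim partial linear space. -/
def graph (S : SlimPLS P) : SimpleGraph P where
  Adj x y := S.Collinear x y
  symm := ⟨fun x y h => ⟨Ne.symm h.1, h.2.elim fun l hl => ⟨l, hl.1, hl.2.2, hl.2.1⟩⟩⟩
  loopless := ⟨fun x h => h.1 rfl⟩

/-- `S` is a generalized quadrangle of order `(2, t)`: it is connected, no point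
is collinear with all other points, every point is on exactly `t+1` lines, and
for every point `x` and line `l` with `x ∉ l` there is exactly one point of `l`
collinear with `x`. -/
def IsGQ (S : SlimPLS P) (t : ℕ) : Prop :=
  S.graph.Connected ∧
  (∀ x : P, ∃ y : P, y ≠ x ∧ ¬ S.Collinear x y) ∧
  (∀ x : P, {l | l ∈ S.lines ∧ x ∈ l}.ncard = t + 1) ∧
  (∀ x : P, ∀ l ∈ S.lines, x ∉ l → ∃! y : P, y ∈ l ∧ S.Collinear x y)

/-- A set of points is an arc if its points are pairwise non-collinear. -/
def IsArc (S : SlimPLS P) (T : Set P) : Prop :=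
  ∀ x ∈ T, ∀ y ∈ T, x ≠ y → ¬ S.Collinear x y

/-- `{a,b,c}` is a complete 3-arc: three pairwise distinct, pairwise
non-collinear points not contained in a 4-arc. -/
def Complete3Arc (S : SlimPLS P) (a b c : P) : Prop :=
  a ≠ b ∧ a ≠ c ∧ b ≠ c ∧ S.IsArc {a, b, c} ∧
  ∀ d : P, d ∉ ({a, b, c} : Set P) → ¬ S.IsArc (insert d {a, b, c})

/-- `{a,b,c}` is a complete 3-arc of the subset `Q`: three pairwise distinct,
pairwise non-collinear points of `Q` not contained in a 4-arc inside `Q`. -/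
def Complete3ArcIn (S : SlimPLS P) (Q : Set P) (a b c : P) : Prop :=
  a ∈ Q ∧ b ∈ Q ∧ c ∈ Q ∧ a ≠ b ∧ a ≠ c ∧ b ≠ c ∧ S.IsArc {a, b, c} ∧
  ∀ d ∈ Q, d ∉ ({a, b, c} : Set P) → ¬ S.IsArc (insert d {a, b, c})

/-- `Q` is a sub-generalized-quadrangle of order `(2,t)` of `S`: together with
the lines of `S` contained in it, `Q` is a `(2,t)`-GQ; in particular any line
meeting `Q` in at least two points is contained in `Q`. -/
def IsSubGQ (S : SlimPLS P) (Q : Set P) (t : ℕ) : Prop :=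
  Q.Nonempty ∧
  (∃ l ∈ S.lines, (l : Set P) ⊆ Q) ∧
  (∀ l ∈ S.lines, ∀ x ∈ l, ∀ y ∈ l, x ≠ y → x ∈ Q → y ∈ Q → (l : Set P) ⊆ Q) ∧
  (SimpleGraph.induce Q S.graph).Connected ∧
  (∀ x ∈ Q, ∃ y ∈ Q, y ≠ x ∧ ¬ S.Collinear x y) ∧
  (∀ x ∈ Q, {l | l ∈ S.lines ∧ x ∈ l ∧ (l : Set P) ⊆ Q}.ncard = t + 1) ∧
  (∀ x ∈ Q, ∀ l ∈ S.lines, (l : Set P) ⊆ Q → x ∉ l → ∃! y : P, y ∈ l ∧ S.Collinear x y)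

/-- `S` is a near hexagon: connected of diameter 3, no point collinear with all
other points, and for every point `x` and line `l` there is a unique point of
`l` nearest to `x`. -/
def IsNearHexagon (S : SlimPLS P) : Prop :=
  S.graph.Connected ∧
  (∀ x y : P, S.graph.dist x y ≤ 3) ∧
  (∃ x y : P, S.graph.dist x y = 3) ∧
  (∀ x : P, ∃ y : P, y ≠ x ∧ ¬ S.Collinear x y) ∧
  (∀ x : P, ∀ l ∈ S.lines, ∃! y : P, y ∈ l ∧ ∀ z ∈ l, S.graph.dist x y ≤ S.graph.dist x z)

/-- `S` is dense: any two points at distance 2 have at least two common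
neighbours. -/
def IsDense (S : SlimPLS P) : Prop :=
  ∀ x y : P, S.graph.dist x y = 2 →
    ∃ u v : P, u ≠ v ∧ S.Collinear x u ∧ S.Collinear u y ∧ S.Collinear x v ∧ S.Collinear v y

/-- `Q` is a quad: a convex subset of diameter 2 in which no point is collinear
with all other points of `Q`. -/
def IsQuad (S : SlimPLS P) (Q : Set P) : Prop :=
  (∀ u ∈ Q, ∀ v ∈ Q, ∀ w : P,
      S.graph.dist u w + S.graph.dist w v = S.graph.dist u v → w ∈ Q) ∧
  (∀ u ∈ Q, ∀ v ∈ Q, S.graph.dist u v ≤ 2) ∧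
  (∃ u ∈ Q, ∃ v ∈ Q, S.graph.dist u v = 2) ∧
  (∀ u ∈ Q, ∃ v ∈ Q, v ≠ u ∧ ¬ S.Collinear u v)

/-- A quad `Q` is of type `(2, t₂)` if every point of `Q` lies on exactly
`t₂ + 1` lines contained in `Q`. -/
def QuadType (S : SlimPLS P) (Q : Set P) (t₂ : ℕ) : Prop :=
  ∀ x ∈ Q, {l | l ∈ S.lines ∧ x ∈ l ∧ (l : Set P) ⊆ Q}.ncard = t₂ + 1

/-- The point-quad pair `(x, Q)` is classical: there is a unique point `y ∈ Q`
nearest to `x`, with `d(x,z) = d(x,y) + d(y,z)` for all `z ∈ Q`. -/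
def IsClassicalPair (S : SlimPLS P) (x : P) (Q : Set P) : Prop :=
  ∃! y : P, y ∈ Q ∧ ∀ z ∈ Q, S.graph.dist x z = S.graph.dist x y + S.graph.dist y z

/-- A quad is classical (big) if every point-quad pair with it is classical. -/
def IsClassicalQuad (S : SlimPLS P) (Q : Set P) : Prop :=
  ∀ x : P, S.IsClassicalPair x Q

/-- A subspace: any line containing two of its points is contained in it. -/
def IsSubspace (S : SlimPLS P) (X : Set P) : Prop :=
  ∀ l ∈ S.lines, ∀ x ∈ l, ∀ y ∈ l, x ≠ y → x ∈ X → y ∈ X → (l : Set P) ⊆ X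

/-- The subspace generated by a set of points. -/
def subspaceGen (S : SlimPLS P) (A : Set P) : Set P :=
  ⋂₀ {X | S.IsSubspace X ∧ A ⊆ X}

/-- `NPdim S` is the rank over `F₂` of the distance-3 adjacency matrix. -/
noncomputable def NPdim [Fintype P] (S : SlimPLS P) : ℕ :=
  Matrix.rank (Matrix.of fun x y : P => if S.graph.dist x y = 3 then (1 : ZMod 2) else 0)

/-- `dimV S` is the dimension of the universal representation module of `S`:
the free `F₂`-vector space on the points modulo the span of the elements
`v_x + v_y + v_z` for the lines `{x,y,z}`. -/
noncomputable def dimV (S : SlimPLS P) : ℕ :=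
  Module.finrank (ZMod 2)
    ((P →₀ ZMod 2) ⧸ Submodule.span (ZMod 2)
      {f : P →₀ ZMod 2 | ∃ l ∈ S.lines, f = ∑ x ∈ l, Finsupp.single x 1})

end SlimPLS

/-- A representation of a slim partial linear space `S`: an assignment of an
order-2 element `r x` of `R` to each point `x`, such that the images generate
`R` and for every line `{x,y,z}` the set `{1, r x, r y, r z}` is a Klein four
subgroup (`r x * r y = r z` for the three pairwise distinct points of a line). -/
structure SlimPLS.Rep {P : Type*} (S : SlimPLS P) (R : Type*) [Group R] where
  r : P → R
  order_two : ∀ x : P, orderOf (r x) = 2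
  gen : Subgroup.closure (Set.range r) = ⊤
  line_rel : ∀ l ∈ S.lines, ∀ x ∈ l, ∀ y ∈ l, ∀ z ∈ l,
    x ≠ y → x ≠ z → y ≠ z → r x * r y = r z

/-- A finite 2-group is extraspecial if its Frattini subgroup, commutator
subgroup and center coincide and have order 2. -/
def IsExtraspecial (G : Type*) [Group G] : Prop :=
  Finite G ∧ IsPGroup 2 G ∧ frattini G = commutator G ∧
    commutator G = Subgroup.center G ∧ Nat.card (Subgroup.center G) = 2


/-! ### Auxiliary development for Statement 3 -/

namespace SlimPLS

variable {P : Type*} {S : SlimPLS P}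

lemma col_symm {x y : P} (h : S.Collinear x y) : S.Collinear y x :=
  ⟨h.1.symm, let ⟨l, hl, hx, hy⟩ := h.2; ⟨l, hl, hy, hx⟩⟩

lemma collinear_of_mem {l : Finset P} (hl : l ∈ S.lines) {a b : P}
    (ha : a ∈ l) (hb : b ∈ l) (hab : a ≠ b) : S.Collinear a b :=
  ⟨hab, l, hl, ha, hb⟩

/-- The line through two collinear points. -/
noncomputable def lineOf (S : SlimPLS P) (x y : P) : Finset P :=
  if h : S.Collinear x y then h.2.choose else ∅

variable {x y : P}

lemma lineOf_spec (h : S.Collinear x y) :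
    S.lineOf x y ∈ S.lines ∧ x ∈ S.lineOf x y ∧ y ∈ S.lineOf x y := by
  rw [lineOf, dif_pos h]; exact h.2.choose_spec

lemma line_eq (h : S.Collinear x y) {l : Finset P} (hl : l ∈ S.lines)
    (hx : x ∈ l) (hy : y ∈ l) : l = S.lineOf x y :=
  S.unique_line l hl _ (lineOf_spec h).1 x y h.1 hx hy (lineOf_spec h).2.1 (lineOf_spec h).2.2

lemma third_card (h : S.Collinear x y) :
    (((S.lineOf x y).erase x).erase y).card = 1 := by
  have h3 := S.three_points _ (lineOf_spec h).1
  have hy' : y ∈ (S.lineOf x y).erase x :=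
    Finset.mem_erase.mpr ⟨h.1.symm, (lineOf_spec h).2.2⟩
  have hcard : ((S.lineOf x y).erase x).card = 2 := by
    rw [Finset.card_erase_of_mem (lineOf_spec h).2.1, h3]
  rw [Finset.card_erase_of_mem hy', hcard]

/-- The third point on the line through two collinear points. -/
noncomputable def star (S : SlimPLS P) (x y : P) : P :=
  if h : ∃ z, z ∈ ((S.lineOf x y).erase x).erase y then h.choose else x

lemma star_spec (h : S.Collinear x y) :
    S.star x y ∈ S.lineOf x y ∧ S.star x y ≠ x ∧ S.star x y ≠ y := by
  have hne : ∃ z, z ∈ ((S.lineOf x y).erase x).erase y := by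
    obtain ⟨z, hz⟩ := Finset.card_eq_one.mp (third_card h)
    exact ⟨z, hz ▸ Finset.mem_singleton_self z⟩
  have hmem : S.star x y ∈ ((S.lineOf x y).erase x).erase y := by
    rw [star, dif_pos hne]; exact hne.choose_spec
  have h1 := Finset.mem_erase.mp hmem
  have h2 := Finset.mem_erase.mp h1.2
  exact ⟨h2.2, h2.1, h1.1⟩

lemma star_unique (h : S.Collinear x y) {z : P} (hz : z ∈ S.lineOf x y)
    (hzx : z ≠ x) (hzy : z ≠ y) : z = S.star x y := by
  obtain ⟨w, hw⟩ := Finset.card_eq_one.mp (third_card h)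
  have h1 : z ∈ ((S.lineOf x y).erase x).erase y :=
    Finset.mem_erase.mpr ⟨hzy, Finset.mem_erase.mpr ⟨hzx, hz⟩⟩
  have h2 : S.star x y ∈ ((S.lineOf x y).erase x).erase y := by
    have hs := star_spec h
    exact Finset.mem_erase.mpr ⟨hs.2.2, Finset.mem_erase.mpr ⟨hs.2.1, hs.1⟩⟩
  rw [hw, Finset.mem_singleton] at h1 h2
  rw [h1, h2]

lemma mem_lineOf_iff (h : S.Collinear x y) {z : P} :
    z ∈ S.lineOf x y ↔ z = x ∨ z = y ∨ z = S.star x y := by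
  constructor
  · intro hz
    by_cases h1 : z = x
    · exact Or.inl h1
    by_cases h2 : z = y
    · exact Or.inr (Or.inl h2)
    exact Or.inr (Or.inr (star_unique h hz h1 h2))
  · rintro (rfl | rfl | rfl)
    · exact (lineOf_spec h).2.1
    · exact (lineOf_spec h).2.2
    · exact (star_spec h).1

lemma col_star_left (h : S.Collinear x y) : S.Collinear x (S.star x y) :=
  collinear_of_mem (lineOf_spec h).1 (lineOf_spec h).2.1 (star_spec h).1 (Ne.symm (star_spec h).2.1)

lemma col_star_right (h : S.Collinear x y) : S.Collinear y (S.star x y) :=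
  collinear_of_mem (lineOf_spec h).1 (lineOf_spec h).2.2 (star_spec h).1 (Ne.symm (star_spec h).2.2)

lemma lineOf_comm (h : S.Collinear x y) : S.lineOf x y = S.lineOf y x :=
  line_eq (col_symm h) (lineOf_spec h).1 (lineOf_spec h).2.2 (lineOf_spec h).2.1

lemma star_comm (h : S.Collinear x y) : S.star x y = S.star y x := by
  refine star_unique (col_symm h) ?_ (star_spec h).2.2 (star_spec h).2.1
  rw [← lineOf_comm h]; exact (star_spec h).1

lemma lineOf_star_left (h : S.Collinear x y) :
    S.lineOf x y = S.lineOf x (S.star x y) :=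
  line_eq (col_star_left h) (lineOf_spec h).1 (lineOf_spec h).2.1 (star_spec h).1

lemma star_star (h : S.Collinear x y) : S.star x (S.star x y) = y := by
  refine (star_unique (col_star_left h) ?_ h.1.symm (Ne.symm (star_spec h).2.2)).symm
  rw [← lineOf_star_left h]; exact (lineOf_spec h).2.2

section Rep

variable {R : Type*} [Group R] (ρ : S.Rep R)

lemma rep_mul (h : S.Collinear x y) : ρ.r x * ρ.r y = ρ.r (S.star x y) := by
  have hs := star_spec h
  exact ρ.line_rel _ (lineOf_spec h).1 x (lineOf_spec h).2.1 y (lineOf_spec h).2.2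
    _ hs.1 h.1 (Ne.symm hs.2.1) (Ne.symm hs.2.2)

lemma rep_comm_col (h : S.Collinear x y) : ρ.r x * ρ.r y = ρ.r y * ρ.r x := by
  rw [rep_mul ρ h, rep_mul ρ (col_symm h), star_comm h]

end Rep

section GQ

variable (hGQ : S.IsGQ 4)
include hGQ

lemma mem_of_two {l : Finset P} (hl : l ∈ S.lines) {a b z : P} (ha : a ∈ l) (hb : b ∈ l)
    (hab : a ≠ b) (hza : S.Collinear z a) (hzb : S.Collinear z b) : z ∈ l := by
  by_contra hz
  obtain ⟨u, _, huniq⟩ := hGQ.2.2.2 z l hl hz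
  exact hab ((huniq a ⟨ha, hza⟩).trans (huniq b ⟨hb, hzb⟩).symm)

lemma nbr_unique {l : Finset P} (hl : l ∈ S.lines) {a b z : P} (hz : z ∉ l) (ha : a ∈ l)
    (hza : S.Collinear z a) (hb : b ∈ l) (hba : b ≠ a) : ¬ S.Collinear z b := by
  intro hzb
  obtain ⟨u, _, huniq⟩ := hGQ.2.2.2 z l hl hz
  exact hba ((huniq b ⟨hb, hzb⟩).trans (huniq a ⟨ha, hza⟩).symm)

lemma exists_nbr {l : Finset P} (hl : l ∈ S.lines) {z : P} (hz : z ∉ l) :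
    ∃ a ∈ l, S.Collinear z a :=
  let ⟨u, hu, _⟩ := hGQ.2.2.2 z l hl hz
  ⟨u, hu.1, hu.2⟩

lemma perp_not_col {u v : P} (hxy : ¬ S.Collinear x y) (hne : x ≠ y)
    (hxu : S.Collinear x u) (hyu : S.Collinear y u)
    (hxv : S.Collinear x v) (hyv : S.Collinear y v) (huv : u ≠ v) :
    ¬ S.Collinear u v := by
  intro h
  have hx : x ∈ S.lineOf u v :=
    mem_of_two hGQ (lineOf_spec h).1 (lineOf_spec h).2.1 (lineOf_spec h).2.2 huv hxu hxv
  have hy : y ∈ S.lineOf u v :=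
    mem_of_two hGQ (lineOf_spec h).1 (lineOf_spec h).2.1 (lineOf_spec h).2.2 huv hyu hyv
  exact hxy (collinear_of_mem (lineOf_spec h).1 hx hy hne)

lemma perp_enum {a b : P} (hab : ¬ S.Collinear a b) (hne : a ≠ b) :
    ∃ u : Fin 5 → P, Function.Injective u ∧ (∀ i, S.Collinear a (u i)) ∧
      (∀ i, S.Collinear b (u i)) ∧ (∀ v, S.Collinear a v → S.Collinear b v → ∃ i, v = u i) := by
  classical
  have hnc : {l | l ∈ S.lines ∧ b ∈ l}.ncard = 5 := hGQ.2.2.1 b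
  have hfin : {l | l ∈ S.lines ∧ b ∈ l}.Finite :=
    Set.finite_of_ncard_ne_zero (by rw [hnc]; norm_num)
  have hcard : hfin.toFinset.card = 5 := by
    rw [← Set.ncard_eq_toFinset_card _ hfin, hnc]
  set e := Finset.equivFinOfCardEq hcard with he
  have hli : ∀ i : Fin 5, (e.symm i : Finset P) ∈ S.lines ∧ b ∈ (e.symm i : Finset P) := by
    intro i
    have := (e.symm i).2
    rw [Set.Finite.mem_toFinset] at this
    exact this
  have hanotin : ∀ i : Fin 5, a ∉ (e.symm i : Finset P) := by
    intro i ha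
    exact hab (collinear_of_mem (hli i).1 ha (hli i).2 hne)
  have hex : ∀ i : Fin 5, ∃! y, y ∈ (e.symm i : Finset P) ∧ S.Collinear a y :=
    fun i => hGQ.2.2.2 a _ (hli i).1 (hanotin i)
  refine ⟨fun i => (hex i).exists.choose, ?_, ?_, ?_, ?_⟩
  · intro i j hij
    have hi := (hex i).exists.choose_spec
    have hj := (hex j).exists.choose_spec
    have hne' : (hex i).exists.choose ≠ b := by
      intro h; rw [h] at hi; exact hab hi.2
    have hlij : (e.symm i : Finset P) = (e.symm j : Finset P) := by
      refine S.unique_line _ (hli i).1 _ (hli j).1 _ b hne' hi.1 (hli i).2 ?_ (hli j).2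
      have hij' : (hex i).exists.choose = (hex j).exists.choose := hij
      rw [hij']; exact hj.1
    have : e.symm i = e.symm j := Subtype.ext hlij
    exact e.symm.injective this
  · exact fun i => ((hex i).exists.choose_spec).2
  · intro i
    have hi := (hex i).exists.choose_spec
    have hne' : b ≠ (hex i).exists.choose := by
      intro h; rw [← h] at hi; exact hab hi.2
    exact collinear_of_mem (hli i).1 (hli i).2 hi.1 hne'
  · intro v hav hbv
    have hl : S.lineOf b v ∈ hfin.toFinset := by
      rw [Set.Finite.mem_toFinset]
      exact ⟨(lineOf_spec hbv).1, (lineOf_spec hbv).2.1⟩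
    refine ⟨e ⟨_, hl⟩, ?_⟩
    have hsymm : e.symm (e ⟨_, hl⟩) = ⟨_, hl⟩ := e.symm_apply_apply _
    refine (hex (e ⟨_, hl⟩)).unique ⟨?_, hav⟩ ((hex _).exists.choose_spec)
    rw [hsymm]
    exact (lineOf_spec hbv).2.2

lemma lineOf_ne_of {z a b : P} (hza : S.Collinear z a) (hzb : S.Collinear z b)
    (hne : a ≠ b) (hnab : ¬ S.Collinear a b) : S.lineOf z a ≠ S.lineOf z b := by
  intro h
  have hb : b ∈ S.lineOf z a := h ▸ (lineOf_spec hzb).2.2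
  exact hnab (collinear_of_mem (lineOf_spec hza).1 (lineOf_spec hza).2.2 hb hne)

lemma six_nbrs {z : P} (c : Fin 6 → P) (hc : ∀ m, S.Collinear z (c m))
    (hd : ∀ m n, m ≠ n → S.lineOf z (c m) ≠ S.lineOf z (c n)) : False := by
  classical
  have hnc : {l | l ∈ S.lines ∧ z ∈ l}.ncard = 5 := hGQ.2.2.1 z
  have hfin : {l | l ∈ S.lines ∧ z ∈ l}.Finite :=
    Set.finite_of_ncard_ne_zero (by rw [hnc]; norm_num)
  have hcard : hfin.toFinset.card = 5 := by
    rw [← Set.ncard_eq_toFinset_card _ hfin, hnc]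
  have hinj : Function.Injective (fun m => S.lineOf z (c m)) := by
    intro m n h
    by_contra hmn
    exact hd m n hmn h
  have hsub : Finset.image (fun m => S.lineOf z (c m)) Finset.univ ⊆ hfin.toFinset := by
    intro l hl
    obtain ⟨m, _, rfl⟩ := Finset.mem_image.mp hl
    rw [Set.Finite.mem_toFinset]
    exact ⟨(lineOf_spec (hc m)).1, (lineOf_spec (hc m)).2.1⟩
  have := Finset.card_le_card hsub
  rw [Finset.card_image_of_injective _ hinj, Finset.card_univ, Fintype.card_fin, hcard] at this
  omega

variable {u v : P}

lemma cross_col (hxy : ¬ S.Collinear x y) (hne : x ≠ y)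
    (hxu : S.Collinear x u) (hyu : S.Collinear y u)
    (hxv : S.Collinear x v) (hyv : S.Collinear y v) (huv : u ≠ v) :
    S.Collinear (S.star x u) (S.star y v) := by
  have huvnc : ¬ S.Collinear u v := perp_not_col hGQ hxy hne hxu hyu hxv hyv huv
  set p := S.star x u with hp
  set q := S.star y v with hq
  have hpu : S.Collinear u p := col_star_right hxu
  have hpx : S.Collinear x p := col_star_left hxu
  have hqy : S.Collinear y q := col_star_left hyv
  have hqv : S.Collinear v q := col_star_right hyv
  have hynotin : y ∉ S.lineOf x u := by
    rw [mem_lineOf_iff hxu]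
    push_neg
    refine ⟨hne.symm, hyu.1, ?_⟩
    intro h; exact hxy (h ▸ hpx)
  have hynp : ¬ S.Collinear y p :=
    nbr_unique hGQ (lineOf_spec hxu).1 hynotin (lineOf_spec hxu).2.2 hyu (star_spec hxu).1
      (star_spec hxu).2.2
  have hvnotin : v ∉ S.lineOf x u := by
    rw [mem_lineOf_iff hxu]
    push_neg
    refine ⟨fun h => hxv.1 h.symm, fun h => huv h.symm, ?_⟩
    intro h; exact huvnc (h ▸ hpu)
  have hvnp : ¬ S.Collinear v p :=
    nbr_unique hGQ (lineOf_spec hxu).1 hvnotin (lineOf_spec hxu).2.1 (col_symm hxv)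
      (star_spec hxu).1 (star_spec hxu).2.1
  have hpnotin : p ∉ S.lineOf y v := by
    rw [mem_lineOf_iff hyv]
    push_neg
    exact ⟨fun h => hxy (h ▸ hpx), fun h => huvnc (h ▸ hpu), fun h => hynp (h ▸ hqy)⟩
  obtain ⟨a, ha, hpa⟩ := exists_nbr hGQ (lineOf_spec hyv).1 hpnotin
  rw [mem_lineOf_iff hyv] at ha
  rcases ha with rfl | rfl | rfl
  · exact absurd (col_symm hpa) hynp
  · exact absurd (col_symm hpa) hvnp
  · exact hpa

lemma diag_col (hxy : ¬ S.Collinear x y) (hne : x ≠ y)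
    (hxu : S.Collinear x u) (hyu : S.Collinear y u)
    (hxv : S.Collinear x v) (hyv : S.Collinear y v) (huv : u ≠ v) :
    S.Collinear (S.star (S.star x u) (S.star y v)) (S.star x v) := by
  have huvnc : ¬ S.Collinear u v := perp_not_col hGQ hxy hne hxu hyu hxv hyv huv
  have hc : S.Collinear (S.star x u) (S.star y v) :=
    cross_col hGQ hxy hne hxu hyu hxv hyv huv
  set p11 := S.star x u with hp11
  set p22 := S.star y v with hp22
  set p12 := S.star x v with hp12
  set q1 := S.star p11 p22 with hq1def
  have hx_p11 : S.Collinear x p11 := col_star_left hxu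
  have hx_p12 : S.Collinear x p12 := col_star_left hxv
  have hv_p12 : S.Collinear v p12 := col_star_right hxv
  have hy_p22 : S.Collinear y p22 := col_star_left hyv
  have hv_p22 : S.Collinear v p22 := col_star_right hyv
  have hxnotin22 : x ∉ S.lineOf y v := by
    rw [mem_lineOf_iff hyv]
    push_neg
    exact ⟨hne, hxv.1, fun h => hxy (col_symm (h ▸ hy_p22))⟩
  have hxnp22 : ¬ S.Collinear x p22 :=
    nbr_unique hGQ (lineOf_spec hyv).1 hxnotin22 (lineOf_spec hyv).2.2 hxv
      (star_spec hyv).1 (star_spec hyv).2.2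
  have hne_p12_p11 : p12 ≠ p11 := by
    intro h
    have h1 : p11 ∈ S.lineOf x v := h ▸ (star_spec hxv).1
    have hll : S.lineOf x v = S.lineOf x u :=
      S.unique_line _ (lineOf_spec hxv).1 _ (lineOf_spec hxu).1 x p11
        (Ne.symm (star_spec hxu).2.1) (lineOf_spec hxv).2.1 h1 (lineOf_spec hxu).2.1
        (star_spec hxu).1
    have hvin : v ∈ S.lineOf x u := hll ▸ (lineOf_spec hxv).2.2
    rw [mem_lineOf_iff hxu] at hvin
    rcases hvin with h' | h' | h'
    · exact hxv.1 h'.symm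
    · exact huv h'.symm
    · exact (star_spec hxv).2.2 (h.trans h'.symm)
  have hne_p12_p22 : p12 ≠ p22 := fun h => hxnp22 (h ▸ hx_p12)
  have hn_p11_p12 : ¬ S.Collinear p11 p12 := by
    intro h
    have hxin : x ∈ S.lineOf p11 p12 :=
      mem_of_two hGQ (lineOf_spec h).1 (lineOf_spec h).2.1 (lineOf_spec h).2.2 h.1 hx_p11 hx_p12
    have hll : S.lineOf p11 p12 = S.lineOf x u :=
      S.unique_line _ (lineOf_spec h).1 _ (lineOf_spec hxu).1 x p11
        (Ne.symm (star_spec hxu).2.1) hxin (lineOf_spec h).2.1 (lineOf_spec hxu).2.1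
        (star_spec hxu).1
    have hin : p12 ∈ S.lineOf x u := hll ▸ (lineOf_spec h).2.2
    rw [mem_lineOf_iff hxu] at hin
    rcases hin with h' | h' | h'
    · exact (star_spec hxv).2.1 h'
    · exact huvnc (col_symm (h' ▸ hv_p12))
    · exact hne_p12_p11 h'
  have hq1_p11 : S.Collinear p11 q1 := col_star_left hc
  have hne_p12_q1 : p12 ≠ q1 := fun h => hn_p11_p12 (h.symm ▸ hq1_p11)
  have hp12notin : p12 ∉ S.lineOf p11 p22 := by
    rw [mem_lineOf_iff hc]
    push_neg
    exact ⟨hne_p12_p11, hne_p12_p22, hne_p12_q1⟩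
  have hn_p12_p22 : ¬ S.Collinear p12 p22 := by
    intro h
    have hvin : v ∈ S.lineOf p12 p22 :=
      mem_of_two hGQ (lineOf_spec h).1 (lineOf_spec h).2.1 (lineOf_spec h).2.2 h.1 hv_p12 hv_p22
    have hll : S.lineOf p12 p22 = S.lineOf y v :=
      S.unique_line _ (lineOf_spec h).1 _ (lineOf_spec hyv).1 v p22
        (Ne.symm (star_spec hyv).2.2) hvin (lineOf_spec h).2.2 (lineOf_spec hyv).2.2
        (star_spec hyv).1
    have hin : p12 ∈ S.lineOf y v := hll ▸ (lineOf_spec h).2.1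
    rw [mem_lineOf_iff hyv] at hin
    rcases hin with h' | h' | h'
    · exact hxy (h' ▸ hx_p12)
    · exact (star_spec hxv).2.2 h'
    · exact hne_p12_p22 h'
  obtain ⟨a, ha, hpa⟩ := exists_nbr hGQ (lineOf_spec hc).1 hp12notin
  rw [mem_lineOf_iff hc] at ha
  rcases ha with rfl | rfl | rfl
  · exact absurd (col_symm hpa) hn_p11_p12
  · exact absurd hpa hn_p12_p22
  · exact col_symm hpa

lemma cross_star_eq (hxy : ¬ S.Collinear x y) (hne : x ≠ y)
    (hxu : S.Collinear x u) (hyu : S.Collinear y u)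
    (hxv : S.Collinear x v) (hyv : S.Collinear y v) (huv : u ≠ v) :
    S.star (S.star x u) (S.star y v) = S.star (S.star x v) (S.star y u) := by
  have hc1 : S.Collinear (S.star x u) (S.star y v) :=
    cross_col hGQ hxy hne hxu hyu hxv hyv huv
  have hc2 : S.Collinear (S.star x v) (S.star y u) :=
    cross_col hGQ hxy hne hxv hyv hxu hyu huv.symm
  have hd1 : S.Collinear (S.star (S.star x u) (S.star y v)) (S.star x v) :=
    diag_col hGQ hxy hne hxu hyu hxv hyv huv
  have hd2 : S.Collinear (S.star (S.star y v) (S.star x u)) (S.star y u) :=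
    diag_col hGQ (fun h => hxy (col_symm h)) hne.symm hyv hxv hyu hxu huv.symm
  have hd2' : S.Collinear (S.star (S.star x u) (S.star y v)) (S.star y u) := by
    rwa [← star_comm hc1] at hd2
  have hn_x_p21 : ¬ S.Collinear x (S.star y u) := by
    have hxnotin : x ∉ S.lineOf y u := by
      rw [mem_lineOf_iff hyu]
      push_neg
      exact ⟨hne, hxu.1, fun h => hxy (col_symm (h ▸ col_star_left hyu))⟩
    exact nbr_unique hGQ (lineOf_spec hyu).1 hxnotin (lineOf_spec hyu).2.2 hxu
      (star_spec hyu).1 (star_spec hyu).2.2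
  have hne_p12_p21 : S.star x v ≠ S.star y u := fun h =>
    hn_x_p21 (h ▸ col_star_left hxv)
  have hq1in : S.star (S.star x u) (S.star y v) ∈ S.lineOf (S.star x v) (S.star y u) :=
    mem_of_two hGQ (lineOf_spec hc2).1 (lineOf_spec hc2).2.1 (lineOf_spec hc2).2.2
      hne_p12_p21 hd1 hd2'
  exact star_unique hc2 hq1in hd1.1 hd2'.1

section RepComm

variable {R : Type*} [Group R] (ρ : S.Rep R)

omit hGQ in
private lemma shuffle {a b c d : R} (h : b * c = c * b) :
    (a * c) * (b * d) = a * (b * (c * d)) := by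
  rw [mul_assoc, ← mul_assoc c b d, ← h, mul_assoc, ← mul_assoc]

lemma comm_perp (hxy : ¬ S.Collinear x y) (hne : x ≠ y)
    (hxu : S.Collinear x u) (hyu : S.Collinear y u)
    (hxv : S.Collinear x v) (hyv : S.Collinear y v) (huv : u ≠ v) :
    ρ.r u * ρ.r v = ρ.r v * ρ.r u := by
  have hc1 : S.Collinear (S.star x u) (S.star y v) :=
    cross_col hGQ hxy hne hxu hyu hxv hyv huv
  have hc2 : S.Collinear (S.star x v) (S.star y u) :=
    cross_col hGQ hxy hne hxv hyv hxu hyu huv.symm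
  have E : (ρ.r x * ρ.r u) * (ρ.r y * ρ.r v) = (ρ.r x * ρ.r v) * (ρ.r y * ρ.r u) := by
    rw [rep_mul ρ hxu, rep_mul ρ hyv, rep_mul ρ hxv, rep_mul ρ hyu, rep_mul ρ hc1,
      rep_mul ρ hc2, cross_star_eq hGQ hxy hne hxu hyu hxv hyv huv]
  rw [shuffle (rep_comm_col ρ hyu), shuffle (rep_comm_col ρ hyv)] at E
  exact mul_left_cancel (mul_left_cancel E)

lemma comm_noncol {a b : P} (hab : ¬ S.Collinear a b) (hne : a ≠ b) :
    ρ.r a * ρ.r b = ρ.r b * ρ.r a := by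
  obtain ⟨e, heinj, hea, heb, -⟩ := perp_enum hGQ hab hne
  have h01 : e 0 ≠ e 1 := fun h => absurd (heinj h) (by decide)
  have hnc01 : ¬ S.Collinear (e 0) (e 1) :=
    perp_not_col hGQ hab hne (hea 0) (heb 0) (hea 1) (heb 1) h01
  exact comm_perp hGQ ρ hnc01 h01 (col_symm (hea 0)) (col_symm (hea 1))
    (col_symm (heb 0)) (col_symm (heb 1)) hne

lemma comm_rep (a b : P) : ρ.r a * ρ.r b = ρ.r b * ρ.r a := by
  by_cases h1 : a = b
  · rw [h1]
  by_cases h2 : S.Collinear a b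
  · exact rep_comm_col ρ h2
  · exact comm_noncol hGQ ρ h2 h1

lemma R_comm (hgen : Subgroup.closure (Set.range ρ.r) = ⊤) (g h : R) : g * h = h * g := by
  have hg : g ∈ Subgroup.closure (Set.range ρ.r) := by rw [hgen]; trivial
  have hh : h ∈ Subgroup.closure (Set.range ρ.r) := by rw [hgen]; trivial
  refine Subgroup.closure_induction₂
    (p := fun a b _ _ => Commute a b) ?_ ?_ ?_ ?_ ?_ ?_ ?_ hg hh
  · rintro _ _ ⟨p, rfl⟩ ⟨q, rfl⟩
    exact comm_rep hGQ ρ p q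
  · exact fun a _ => Commute.one_left a
  · exact fun a _ => Commute.one_right a
  · exact fun a b c _ _ _ h1 h2 => h1.mul_left h2
  · exact fun a b c _ _ _ h1 h2 => h1.mul_right h2
  · exact fun a b _ _ h1 => h1.inv_left
  · exact fun a b _ _ h1 => h1.inv_right

end RepComm

end GQ

/-- A base configuration: a non-collinear pair with an enumeration of its perp. -/
structure Cfg (S : SlimPLS P) where
  x : P
  y : P
  w : Fin 5 → P
  hne : x ≠ y
  hxy : ¬ S.Collinear x y
  hwinj : Function.Injective w
  hwx : ∀ i, S.Collinear x (w i)
  hwy : ∀ i, S.Collinear y (w i)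
  hcov : ∀ v, S.Collinear x v → S.Collinear y v → ∃ i, v = w i

namespace Cfg

variable {S : SlimPLS P} (C : Cfg S) (hGQ : S.IsGQ 4)

def symm : Cfg S :=
  ⟨C.y, C.x, C.w, C.hne.symm, fun h => C.hxy (col_symm h), C.hwinj,
    C.hwy, C.hwx, fun v h1 h2 => C.hcov v h2 h1⟩

noncomputable def p1 (i : Fin 5) : P := S.star C.x (C.w i)
noncomputable def p2 (i : Fin 5) : P := S.star C.y (C.w i)
noncomputable def q (i j : Fin 5) : P := S.star (C.p1 i) (C.p2 j)

lemma col_x_p1 (i : Fin 5) : S.Collinear C.x (C.p1 i) := col_star_left (C.hwx i)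
lemma col_w_p1 (i : Fin 5) : S.Collinear (C.w i) (C.p1 i) := col_star_right (C.hwx i)
lemma col_y_p2 (i : Fin 5) : S.Collinear C.y (C.p2 i) := col_star_left (C.hwy i)
lemma col_w_p2 (i : Fin 5) : S.Collinear (C.w i) (C.p2 i) := col_star_right (C.hwy i)
lemma p1_ne_x (i : Fin 5) : C.p1 i ≠ C.x := (star_spec (C.hwx i)).2.1
lemma p1_ne_w (i : Fin 5) : C.p1 i ≠ C.w i := (star_spec (C.hwx i)).2.2
lemma p2_ne_y (i : Fin 5) : C.p2 i ≠ C.y := (star_spec (C.hwy i)).2.1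
lemma p2_ne_w (i : Fin 5) : C.p2 i ≠ C.w i := (star_spec (C.hwy i)).2.2

lemma y_ne_p1 (i : Fin 5) : C.y ≠ C.p1 i :=
  fun h => C.hxy (h.symm ▸ col_x_p1 C i)

include hGQ

lemma y_not_col_p1 (i : Fin 5) : ¬ S.Collinear C.y (C.p1 i) := by
  have hnotin : C.y ∉ S.lineOf C.x (C.w i) := by
    rw [mem_lineOf_iff (C.hwx i)]
    push_neg
    exact ⟨C.hne.symm, (C.hwy i).1, y_ne_p1 C i⟩
  exact nbr_unique hGQ (lineOf_spec (C.hwx i)).1 hnotin (lineOf_spec (C.hwx i)).2.2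
    (C.hwy i) (star_spec (C.hwx i)).1 (star_spec (C.hwx i)).2.2

lemma x_not_col_p2 (i : Fin 5) : ¬ S.Collinear C.x (C.p2 i) := C.symm.y_not_col_p1 hGQ i

omit hGQ in
lemma x_ne_p2 (i : Fin 5) : C.x ≠ C.p2 i := C.symm.y_ne_p1 i

lemma w_ne_p1 (k i : Fin 5) : C.w k ≠ C.p1 i :=
  fun h => y_not_col_p1 C hGQ i (h ▸ C.hwy k)

lemma w_ne_p2 (k i : Fin 5) : C.w k ≠ C.p2 i := C.symm.w_ne_p1 hGQ k i

lemma w_not_col_p1 {k i : Fin 5} (hki : k ≠ i) : ¬ S.Collinear (C.w k) (C.p1 i) := by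
  have hnotin : C.w k ∉ S.lineOf C.x (C.w i) := by
    rw [mem_lineOf_iff (C.hwx i)]
    push_neg
    exact ⟨fun h => (C.hwx k).1 h.symm, C.hwinj.ne hki, w_ne_p1 C hGQ k i⟩
  exact nbr_unique hGQ (lineOf_spec (C.hwx i)).1 hnotin (lineOf_spec (C.hwx i)).2.1
    (col_symm (C.hwx k)) (star_spec (C.hwx i)).1 (p1_ne_x C i)

lemma w_not_col_p2 {k i : Fin 5} (hki : k ≠ i) : ¬ S.Collinear (C.w k) (C.p2 i) :=
  C.symm.w_not_col_p1 hGQ hki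

lemma eq_of_w_col_p1 {k i : Fin 5} (h : S.Collinear (C.w k) (C.p1 i)) : k = i := by
  by_contra hki
  exact w_not_col_p1 C hGQ hki h

lemma eq_of_w_col_p2 {k i : Fin 5} (h : S.Collinear (C.w k) (C.p2 i)) : k = i := by
  by_contra hki
  exact w_not_col_p2 C hGQ hki h

lemma w_not_col_w {i j : Fin 5} (hij : i ≠ j) : ¬ S.Collinear (C.w i) (C.w j) :=
  perp_not_col hGQ C.hxy C.hne (C.hwx i) (C.hwy i) (C.hwx j) (C.hwy j) (C.hwinj.ne hij)

lemma p1_ne {i j : Fin 5} (hij : i ≠ j) : C.p1 i ≠ C.p1 j := by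
  intro h
  have h1 : C.p1 i ∈ S.lineOf C.x (C.w j) := h ▸ (star_spec (C.hwx j)).1
  have hll : S.lineOf C.x (C.w i) = S.lineOf C.x (C.w j) :=
    S.unique_line _ (lineOf_spec (C.hwx i)).1 _ (lineOf_spec (C.hwx j)).1 C.x (C.p1 i)
      (Ne.symm (p1_ne_x C i)) (lineOf_spec (C.hwx i)).2.1 (star_spec (C.hwx i)).1
      (lineOf_spec (C.hwx j)).2.1 h1
  have hin : C.w j ∈ S.lineOf C.x (C.w i) := hll ▸ (lineOf_spec (C.hwx j)).2.2
  rw [mem_lineOf_iff (C.hwx i)] at hin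
  rcases hin with h' | h' | h'
  · exact (C.hwx j).1 h'.symm
  · exact C.hwinj.ne hij.symm h'
  · exact w_ne_p1 C hGQ j i h'

lemma p2_ne {i j : Fin 5} (hij : i ≠ j) : C.p2 i ≠ C.p2 j := C.symm.p1_ne hGQ hij

lemma p1_not_col {i j : Fin 5} (hij : i ≠ j) : ¬ S.Collinear (C.p1 i) (C.p1 j) := by
  intro h
  have hxin : C.x ∈ S.lineOf (C.p1 i) (C.p1 j) :=
    mem_of_two hGQ (lineOf_spec h).1 (lineOf_spec h).2.1 (lineOf_spec h).2.2 h.1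
      (col_x_p1 C i) (col_x_p1 C j)
  have hll : S.lineOf (C.p1 i) (C.p1 j) = S.lineOf C.x (C.w i) :=
    S.unique_line _ (lineOf_spec h).1 _ (lineOf_spec (C.hwx i)).1 C.x (C.p1 i)
      (Ne.symm (p1_ne_x C i)) hxin (lineOf_spec h).2.1 (lineOf_spec (C.hwx i)).2.1
      (star_spec (C.hwx i)).1
  have hin : C.p1 j ∈ S.lineOf C.x (C.w i) := hll ▸ (lineOf_spec h).2.2
  rw [mem_lineOf_iff (C.hwx i)] at hin
  rcases hin with h' | h' | h'
  · exact p1_ne_x C j h'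
  · exact w_ne_p1 C hGQ i j h'.symm
  · exact p1_ne C hGQ hij.symm h'

lemma p2_not_col {i j : Fin 5} (hij : i ≠ j) : ¬ S.Collinear (C.p2 i) (C.p2 j) :=
  C.symm.p1_not_col hGQ hij

lemma p1_ne_p2 (i j : Fin 5) : C.p1 i ≠ C.p2 j :=
  fun h => y_not_col_p1 C hGQ i (h ▸ col_y_p2 C j)

lemma p1_not_col_p2 (i : Fin 5) : ¬ S.Collinear (C.p1 i) (C.p2 i) := by
  intro h
  have hwin : C.w i ∈ S.lineOf (C.p1 i) (C.p2 i) :=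
    mem_of_two hGQ (lineOf_spec h).1 (lineOf_spec h).2.1 (lineOf_spec h).2.2 h.1
      (col_w_p1 C i) (col_w_p2 C i)
  have hll : S.lineOf (C.p1 i) (C.p2 i) = S.lineOf C.x (C.w i) :=
    S.unique_line _ (lineOf_spec h).1 _ (lineOf_spec (C.hwx i)).1 (C.w i) (C.p1 i)
      (Ne.symm (p1_ne_w C i)) hwin (lineOf_spec h).2.1 (lineOf_spec (C.hwx i)).2.2
      (star_spec (C.hwx i)).1
  have hin : C.p2 i ∈ S.lineOf C.x (C.w i) := hll ▸ (lineOf_spec h).2.2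
  rw [mem_lineOf_iff (C.hwx i)] at hin
  rcases hin with h' | h' | h'
  · exact x_ne_p2 C i h'.symm
  · exact p2_ne_w C i h'
  · exact p1_ne_p2 C hGQ i i h'.symm

lemma col_p1_p2 {i j : Fin 5} (hij : i ≠ j) : S.Collinear (C.p1 i) (C.p2 j) :=
  cross_col hGQ C.hxy C.hne (C.hwx i) (C.hwy i) (C.hwx j) (C.hwy j) (C.hwinj.ne hij)

lemma q_symm {i j : Fin 5} (hij : i ≠ j) : C.q i j = C.q j i :=
  cross_star_eq hGQ C.hxy C.hne (C.hwx i) (C.hwy i) (C.hwx j) (C.hwy j) (C.hwinj.ne hij)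

lemma col_p1_q {i j : Fin 5} (hij : i ≠ j) : S.Collinear (C.p1 i) (C.q i j) :=
  col_star_left (col_p1_p2 C hGQ hij)

lemma col_p2_q {i j : Fin 5} (hij : i ≠ j) : S.Collinear (C.p2 j) (C.q i j) :=
  col_star_right (col_p1_p2 C hGQ hij)

lemma x_ne_q {i j : Fin 5} (hij : i ≠ j) : C.x ≠ C.q i j :=
  fun h => x_not_col_p2 C hGQ j (col_symm (h ▸ col_p2_q C hGQ hij))

lemma y_ne_q {i j : Fin 5} (hij : i ≠ j) : C.y ≠ C.q i j :=
  fun h => y_not_col_p1 C hGQ i (col_symm (h ▸ col_p1_q C hGQ hij))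

lemma x_not_col_q {i j : Fin 5} (hij : i ≠ j) : ¬ S.Collinear C.x (C.q i j) := by
  have hc := col_p1_p2 C hGQ hij
  have hnotin : C.x ∉ S.lineOf (C.p1 i) (C.p2 j) := by
    rw [mem_lineOf_iff hc]
    push_neg
    exact ⟨Ne.symm (p1_ne_x C i), x_ne_p2 C j, x_ne_q C hGQ hij⟩

  exact nbr_unique hGQ (lineOf_spec hc).1 hnotin (lineOf_spec hc).2.1 (col_x_p1 C i)
    (star_spec hc).1 (star_spec hc).2.1

lemma y_not_col_q {i j : Fin 5} (hij : i ≠ j) : ¬ S.Collinear C.y (C.q i j) := by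
  have hc := col_p1_p2 C hGQ hij
  have hnotin : C.y ∉ S.lineOf (C.p1 i) (C.p2 j) := by
    rw [mem_lineOf_iff hc]
    push_neg
    exact ⟨y_ne_p1 C i, Ne.symm (p2_ne_y C j), y_ne_q C hGQ hij⟩
  exact nbr_unique hGQ (lineOf_spec hc).1 hnotin (lineOf_spec hc).2.2 (col_y_p2 C j)
    (star_spec hc).1 (star_spec hc).2.2

lemma q_ne_w {i j : Fin 5} (hij : i ≠ j) (k : Fin 5) : C.q i j ≠ C.w k :=
  fun h => x_not_col_q C hGQ hij (h.symm ▸ C.hwx k)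

lemma col_w_q {i j k : Fin 5} (hij : i ≠ j) (hki : k ≠ i) (hkj : k ≠ j) :
    S.Collinear (C.w k) (C.q i j) := by
  have hc := col_p1_p2 C hGQ hij
  have hnotin : C.w k ∉ S.lineOf (C.p1 i) (C.p2 j) := by
    rw [mem_lineOf_iff hc]
    push_neg
    exact ⟨w_ne_p1 C hGQ k i, w_ne_p2 C hGQ k j, fun h => (q_ne_w C hGQ hij k) h.symm⟩
  obtain ⟨a, ha, hpa⟩ := exists_nbr hGQ (lineOf_spec hc).1 hnotin
  rw [mem_lineOf_iff hc] at ha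
  rcases ha with rfl | rfl | rfl
  · exact absurd hpa (w_not_col_p1 C hGQ hki)
  · exact absurd hpa (w_not_col_p2 C hGQ hkj)
  · exact hpa

lemma nbrx_char (v : P) (hv : S.Collinear C.x v) : ∃ k, v = C.w k ∨ v = C.p1 k := by
  have hynotin : C.y ∉ S.lineOf C.x v := by
    rw [mem_lineOf_iff hv]
    push_neg
    refine ⟨C.hne.symm, ?_, ?_⟩
    · intro h; exact C.hxy (h.symm ▸ hv)
    · intro h; exact C.hxy (h.symm ▸ col_star_left hv)
  obtain ⟨s, hs, hys⟩ := exists_nbr hGQ (lineOf_spec hv).1 hynotin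
  rw [mem_lineOf_iff hv] at hs
  rcases hs with rfl | rfl | rfl
  · exact absurd (col_symm hys) C.hxy
  · obtain ⟨k, hk⟩ := C.hcov s hv hys
    exact ⟨k, Or.inl hk⟩
  · obtain ⟨k, hk⟩ := C.hcov _ (col_star_left hv) hys
    refine ⟨k, Or.inr ?_⟩
    rw [show C.p1 k = S.star C.x (C.w k) from rfl, ← hk, star_star hv]

lemma nbry_char (v : P) (hv : S.Collinear C.y v) : ∃ k, v = C.w k ∨ v = C.p2 k :=
  C.symm.nbrx_char hGQ v hv

lemma no_all_w {z : P} (hzx : z ≠ C.x) (hzy : z ≠ C.y) (hcx : ¬ S.Collinear C.x z)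
    (hcy : ¬ S.Collinear C.y z) (hall : ∀ k, S.Collinear z (C.w k)) : False := by
  have hxz : C.x ≠ z := fun h => hzx h.symm
  have h01 : (0 : Fin 5) ≠ 1 := by decide
  have hq'col : S.Collinear (C.p1 0) (S.star z (C.w 1)) :=
    cross_col hGQ hcx hxz (C.hwx 0) (hall 0) (C.hwx 1) (hall 1) (C.hwinj.ne h01)
  set h2 := S.star z (C.w 1) with hh2
  set q' := S.star (C.p1 0) h2 with hq'
  have hcol_z_h2 : S.Collinear z h2 := col_star_left (hall 1)
  have hcol_w1_h2 : S.Collinear (C.w 1) h2 := col_star_right (hall 1)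
  have hy_ne_h2 : C.y ≠ h2 := fun h => hcy (col_symm (h ▸ hcol_z_h2))
  have hynotin : C.y ∉ S.lineOf z (C.w 1) := by
    rw [mem_lineOf_iff (hall 1)]
    push_neg
    exact ⟨Ne.symm hzy, (C.hwy 1).1, hy_ne_h2⟩
  have hy_ncol_h2 : ¬ S.Collinear C.y h2 :=
    nbr_unique hGQ (lineOf_spec (hall 1)).1 hynotin (lineOf_spec (hall 1)).2.2 (C.hwy 1)
      (star_spec (hall 1)).1 (star_spec (hall 1)).2.2
  have hy_ne_q' : C.y ≠ q' := fun h =>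
    y_not_col_p1 C hGQ 0 (col_symm (h ▸ col_star_left hq'col))
  have hynotin2 : C.y ∉ S.lineOf (C.p1 0) h2 := by
    rw [mem_lineOf_iff hq'col]
    push_neg
    exact ⟨y_ne_p1 C 0, hy_ne_h2, hy_ne_q'⟩
  have hyq' : S.Collinear C.y q' := by
    obtain ⟨s, hs, hys⟩ := exists_nbr hGQ (lineOf_spec hq'col).1 hynotin2
    rw [mem_lineOf_iff hq'col] at hs
    rcases hs with rfl | rfl | rfl
    · exact absurd hys (y_not_col_p1 C hGQ 0)
    · exact absurd hys hy_ncol_h2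
    · exact hys
  obtain ⟨k, hk | hk⟩ := nbry_char C hGQ q' hyq'
  · have hcolq'p1 : S.Collinear (C.p1 0) q' := col_star_left hq'col
    have hk0 : k = 0 := eq_of_w_col_p1 C hGQ (col_symm (hk ▸ hcolq'p1))
    have hcolq'h2 : S.Collinear h2 q' := col_star_right hq'col
    have hcolw0h2 : S.Collinear (C.w 0) h2 := by
      have h' := hk ▸ hcolq'h2
      rw [hk0] at h'
      exact col_symm h'
    have hw0notin : C.w 0 ∉ S.lineOf z (C.w 1) := by
      rw [mem_lineOf_iff (hall 1)]
      push_neg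
      exact ⟨fun h => (hall 0).1 h.symm, C.hwinj.ne h01,
        fun h => w_not_col_w C hGQ (show (1:Fin 5) ≠ 0 by decide) (h.symm ▸ hcol_w1_h2)⟩
    exact nbr_unique hGQ (lineOf_spec (hall 1)).1 hw0notin (lineOf_spec (hall 1)).2.1
      (col_symm (hall 0)) (star_spec (hall 1)).1 (star_spec (hall 1)).2.1 hcolw0h2
  · have hm : ∀ m : Fin 5, m ≠ 0 → m ≠ 1 → S.Collinear (C.w m) q' := by
      intro m hm0 hm1
      have hnotin : C.w m ∉ S.lineOf (C.p1 0) h2 := by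
        rw [mem_lineOf_iff hq'col]
        push_neg
        refine ⟨w_ne_p1 C hGQ m 0, ?_, ?_⟩
        · intro h; exact w_not_col_w C hGQ (Ne.symm hm1) (h.symm ▸ hcol_w1_h2)
        · intro h; exact w_not_col_p1 C hGQ hm0 (col_symm (h.symm ▸ col_star_left hq'col))
      have hnc1 : ¬ S.Collinear (C.w m) (C.p1 0) := w_not_col_p1 C hGQ hm0
      have hnc2 : ¬ S.Collinear (C.w m) h2 := by
        have hnotin2 : C.w m ∉ S.lineOf z (C.w 1) := by
          rw [mem_lineOf_iff (hall 1)]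
          push_neg
          exact ⟨fun h => (hall m).1 h.symm, C.hwinj.ne hm1,
            fun h => w_not_col_w C hGQ (Ne.symm hm1) (h.symm ▸ hcol_w1_h2)⟩
        exact nbr_unique hGQ (lineOf_spec (hall 1)).1 hnotin2 (lineOf_spec (hall 1)).2.1
          (col_symm (hall m)) (star_spec (hall 1)).1 (star_spec (hall 1)).2.1
      obtain ⟨s, hs, hws⟩ := exists_nbr hGQ (lineOf_spec hq'col).1 hnotin
      rw [mem_lineOf_iff hq'col] at hs
      rcases hs with rfl | rfl | rfl
      · exact absurd hws hnc1
      · exact absurd hws hnc2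
      · exact hws
    have h2' : (2 : Fin 5) = k := eq_of_w_col_p2 C hGQ (hk ▸ hm 2 (by decide) (by decide))
    have h3' : (3 : Fin 5) = k := eq_of_w_col_p2 C hGQ (hk ▸ hm 3 (by decide) (by decide))
    exact absurd (h2'.trans h3'.symm) (by decide)

lemma p1_ncol_q {a c d : Fin 5} (hcd : c ≠ d) (hac : a ≠ c) (had : a ≠ d) :
    ¬ S.Collinear (C.p1 a) (C.q c d) ∧ C.p1 a ≠ C.q c d := by
  have hc := col_p1_p2 C hGQ hcd
  have hne1 : C.p1 a ≠ C.q c d := fun h =>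
    p1_not_col C hGQ hac.symm (h.symm ▸ col_p1_q C hGQ hcd)
  have hnotin : C.p1 a ∉ S.lineOf (C.p1 c) (C.p2 d) := by
    rw [mem_lineOf_iff hc]
    push_neg
    exact ⟨p1_ne C hGQ hac, p1_ne_p2 C hGQ a d, hne1⟩
  exact ⟨nbr_unique hGQ (lineOf_spec hc).1 hnotin (lineOf_spec hc).2.2
    (col_p1_p2 C hGQ had) (star_spec hc).1 (star_spec hc).2.2, hne1⟩

lemma p2_ncol_q {b c d : Fin 5} (hcd : c ≠ d) (hbc : b ≠ c) (hbd : b ≠ d) :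
    ¬ S.Collinear (C.p2 b) (C.q c d) ∧ C.p2 b ≠ C.q c d := by
  have hc := col_p1_p2 C hGQ hcd
  have hne1 : C.p2 b ≠ C.q c d := fun h =>
    p2_not_col C hGQ hbd.symm (h.symm ▸ col_p2_q C hGQ hcd)
  have hnotin : C.p2 b ∉ S.lineOf (C.p1 c) (C.p2 d) := by
    rw [mem_lineOf_iff hc]
    push_neg
    exact ⟨Ne.symm (p1_ne_p2 C hGQ c b), p2_ne C hGQ hbd, hne1⟩
  exact ⟨nbr_unique hGQ (lineOf_spec hc).1 hnotin (lineOf_spec hc).2.1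
    (col_symm (col_p1_p2 C hGQ hbc.symm)) (star_spec hc).1 (star_spec hc).2.1, hne1⟩

lemma col_q_q {a b c d : Fin 5} (hab : a ≠ b) (hcd : c ≠ d) (hac : a ≠ c) (had : a ≠ d)
    (hbc : b ≠ c) (hbd : b ≠ d) : S.Collinear (C.q a b) (C.q c d) := by
  have hcab := col_p1_p2 C hGQ hab
  have hn1 := p1_ncol_q C hGQ hcd hac had
  have hn2 := p2_ncol_q C hGQ hcd hbc hbd
  have hnotin : C.q c d ∉ S.lineOf (C.p1 a) (C.p2 b) := by
    rw [mem_lineOf_iff hcab]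
    push_neg
    refine ⟨Ne.symm hn1.2, Ne.symm hn2.2, ?_⟩
    intro h
    exact hn1.1 (h.symm ▸ col_p1_q C hGQ hab)
  obtain ⟨s, hs, hws⟩ := exists_nbr hGQ (lineOf_spec hcab).1 hnotin
  rw [mem_lineOf_iff hcab] at hs
  rcases hs with rfl | rfl | rfl
  · exact absurd (col_symm hws) hn1.1
  · exact absurd (col_symm hws) hn2.1
  · exact col_symm hws

lemma rel_w {a b c d e : Fin 5} (hab : a ≠ b) (hcd : c ≠ d) (hac : a ≠ c) (had : a ≠ d)
    (hbc : b ≠ c) (hbd : b ≠ d) (hea : e ≠ a) (heb : e ≠ b) (hec : e ≠ c) (hed : e ≠ d) :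
    C.w e = S.star (C.q a b) (C.q c d) := by
  have hq := col_q_q C hGQ hab hcd hac had hbc hbd
  have h1 : S.Collinear (C.w e) (C.q a b) := col_w_q C hGQ hab hea heb
  have h2 : S.Collinear (C.w e) (C.q c d) := col_w_q C hGQ hcd hec hed
  have hin : C.w e ∈ S.lineOf (C.q a b) (C.q c d) :=
    mem_of_two hGQ (lineOf_spec hq).1 (lineOf_spec hq).2.1 (lineOf_spec hq).2.2 hq.1 h1 h2
  exact star_unique hq hin (Ne.symm (q_ne_w C hGQ hab e)) (Ne.symm (q_ne_w C hGQ hcd e))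

lemma classify {z : P} (hzx : z ≠ C.x) (hzy : z ≠ C.y) (hcx : ¬ S.Collinear C.x z)
    (hcy : ¬ S.Collinear C.y z) : ∃ i j, i ≠ j ∧ z = C.q i j := by
  have hxz : C.x ≠ z := fun h => hzx h.symm
  have hyz : C.y ≠ z := fun h => hzy h.symm
  have hA : ∀ i j, i ≠ j → S.Collinear z (C.p1 i) → S.Collinear z (C.p2 j) → z = C.q i j := by
    intro i j hij h1 h2
    have hc := col_p1_p2 C hGQ hij
    have hzin : z ∈ S.lineOf (C.p1 i) (C.p2 j) :=
      mem_of_two hGQ (lineOf_spec hc).1 (lineOf_spec hc).2.1 (lineOf_spec hc).2.2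
        (p1_ne_p2 C hGQ i j) h1 h2
    rw [mem_lineOf_iff hc] at hzin
    rcases hzin with h' | h' | h'
    · exact absurd h' h1.1
    · exact absurd h' h2.1
    · exact h'
  have hp1 : ∃ i, S.Collinear z (C.p1 i) := by
    by_contra hno
    push_neg at hno
    refine no_all_w C hGQ hzx hzy hcx hcy ?_
    obtain ⟨e, heinj, hex, hez, -⟩ := perp_enum hGQ hcx hxz
    have hwk : ∀ m, ∃ k, e m = C.w k := by
      intro m
      obtain ⟨k, hk | hk⟩ := nbrx_char C hGQ (e m) (hex m)
      · exact ⟨k, hk⟩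
      · exact absurd (hk ▸ hez m) (hno k)
    choose σ hσ using hwk
    have hσinj : Function.Injective σ := fun m n h => heinj (by rw [hσ m, hσ n, h])
    have hσsurj : Function.Surjective σ := Finite.injective_iff_surjective.mp hσinj
    intro k
    obtain ⟨m, rfl⟩ := hσsurj k
    exact (hσ m) ▸ hez m
  have hp2 : ∃ j, S.Collinear z (C.p2 j) := by
    by_contra hno
    push_neg at hno
    refine no_all_w C hGQ hzx hzy hcx hcy ?_
    obtain ⟨e, heinj, hey, hez, -⟩ := perp_enum hGQ hcy hyz
    have hwk : ∀ m, ∃ k, e m = C.w k := by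
      intro m
      obtain ⟨k, hk | hk⟩ := nbry_char C hGQ (e m) (hey m)
      · exact ⟨k, hk⟩
      · exact absurd (hk ▸ hez m) (hno k)
    choose σ hσ using hwk
    have hσinj : Function.Injective σ := fun m n h => heinj (by rw [hσ m, hσ n, h])
    have hσsurj : Function.Surjective σ := Finite.injective_iff_surjective.mp hσinj
    intro k
    obtain ⟨m, rfl⟩ := hσsurj k
    exact (hσ m) ▸ hez m
  obtain ⟨i, hi⟩ := hp1
  obtain ⟨j, hj⟩ := hp2
  by_cases hij : i = j
  swap
  · exact ⟨i, j, hij, hA i j hij hi hj⟩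
  subst hij
  by_cases hk1 : ∃ k, k ≠ i ∧ S.Collinear z (C.p1 k)
  · obtain ⟨k, hki, hzk⟩ := hk1
    exact ⟨k, i, hki, hA k i hki hzk hj⟩
  by_cases hk2 : ∃ k, k ≠ i ∧ S.Collinear z (C.p2 k)
  · obtain ⟨k, hki, hzk⟩ := hk2
    exact ⟨i, k, fun h => hki h.symm, hA i k (fun h => hki h.symm) hi hzk⟩
  push_neg at hk1 hk2
  exfalso
  have hzwi : ¬ S.Collinear z (C.w i) := by
    intro h
    have hzin : z ∈ S.lineOf C.x (C.w i) :=
      mem_of_two hGQ (lineOf_spec (C.hwx i)).1 (lineOf_spec (C.hwx i)).2.2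
        (star_spec (C.hwx i)).1 (Ne.symm (p1_ne_w C i)) h hi
    rw [mem_lineOf_iff (C.hwx i)] at hzin
    rcases hzin with h' | h' | h'
    · exact hzx h'
    · exact h.1 h'
    · exact hi.1 h'
  have hallw : ∀ k, k ≠ i → S.Collinear z (C.w k) := by
    obtain ⟨e, heinj, hex, hez, -⟩ := perp_enum hGQ hcx hxz
    have hsub : Finset.image e Finset.univ ⊆
        insert (C.p1 i) (Finset.image C.w (Finset.univ.erase i)) := by
      intro s hs
      obtain ⟨m, -, rfl⟩ := Finset.mem_image.mp hs
      obtain ⟨k, hk | hk⟩ := nbrx_char C hGQ (e m) (hex m)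
      · have hki : k ≠ i := by
          rintro rfl
          exact hzwi (hk ▸ hez m)
        rw [hk]
        exact Finset.mem_insert_of_mem (Finset.mem_image.mpr
          ⟨k, Finset.mem_erase.mpr ⟨hki, Finset.mem_univ k⟩, rfl⟩)
      · have hki : k = i := by
          by_contra hki
          exact hk1 k hki (hk ▸ hez m)
        rw [hk, hki]
        exact Finset.mem_insert_self _ _
    have hcard5 : (Finset.image e Finset.univ).card = 5 := by
      rw [Finset.card_image_of_injective _ heinj, Finset.card_univ, Fintype.card_fin]
    have hle : (insert (C.p1 i) (Finset.image C.w (Finset.univ.erase i))).card ≤ 5 := by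
      refine le_trans (Finset.card_insert_le _ _) ?_
      have h1 := Finset.card_image_le (f := C.w) (s := Finset.univ.erase i)
      have hcer : (Finset.univ.erase i).card = 4 := by
        rw [Finset.card_erase_of_mem (Finset.mem_univ i), Finset.card_univ, Fintype.card_fin]
      omega
    have heq : Finset.image e Finset.univ =
        insert (C.p1 i) (Finset.image C.w (Finset.univ.erase i)) :=
      Finset.eq_of_subset_of_card_le hsub (by omega)
    intro k hki
    have hmem : C.w k ∈ Finset.image e Finset.univ := by
      rw [heq]
      exact Finset.mem_insert_of_mem (Finset.mem_image.mpr
        ⟨k, Finset.mem_erase.mpr ⟨hki, Finset.mem_univ k⟩, rfl⟩)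
    obtain ⟨m, -, hm⟩ := Finset.mem_image.mp hmem
    exact hm ▸ hez m
  have hia : ∀ k : Fin 5, k ≠ 0 → i + k ≠ i := by
    intro k hk h
    have h0 : i + k = i + 0 := by rw [add_zero]; exact h
    exact hk (add_left_cancel h0)
  have hiab : ∀ k l : Fin 5, k ≠ l → i + k ≠ i + l := fun k l hkl h => hkl (add_left_cancel h)
  have hcol : ∀ m : Fin 6, S.Collinear z (![C.p1 i, C.p2 i, C.w (i+1), C.w (i+2), C.w (i+3), C.w (i+4)] m) := by
    intro m
    fin_cases m <;> simp only [Matrix.cons_val_zero, Matrix.cons_val_one, Matrix.head_cons,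
      Matrix.cons_val_two, Matrix.tail_cons, Matrix.cons_val_three, Matrix.cons_val_four,
      Matrix.cons_val_succ]
    · exact hi
    · exact hj
    · exact hallw _ (hia 1 (by decide))
    · exact hallw _ (hia 2 (by decide))
    · exact hallw _ (hia 3 (by decide))
    · exact hallw _ (hia 4 (by decide))
  have hP12 : C.p1 i ≠ C.p2 i ∧ ¬ S.Collinear (C.p1 i) (C.p2 i) :=
    ⟨p1_ne_p2 C hGQ i i, p1_not_col_p2 C hGQ i⟩
  have hWP1 : ∀ k : Fin 5, k ≠ i → C.p1 i ≠ C.w k ∧ ¬ S.Collinear (C.p1 i) (C.w k) :=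
    fun k hk => ⟨fun h => w_ne_p1 C hGQ k i h.symm, fun h => w_not_col_p1 C hGQ hk (col_symm h)⟩
  have hWP2 : ∀ k : Fin 5, k ≠ i → C.p2 i ≠ C.w k ∧ ¬ S.Collinear (C.p2 i) (C.w k) :=
    fun k hk => ⟨fun h => w_ne_p2 C hGQ k i h.symm, fun h => w_not_col_p2 C hGQ hk (col_symm h)⟩
  have hWW : ∀ k l : Fin 5, k ≠ l → C.w k ≠ C.w l ∧ ¬ S.Collinear (C.w k) (C.w l) :=
    fun k l hkl => ⟨C.hwinj.ne hkl, w_not_col_w C hGQ hkl⟩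
  have hpair : ∀ m n : Fin 6, m ≠ n →
      (![C.p1 i, C.p2 i, C.w (i+1), C.w (i+2), C.w (i+3), C.w (i+4)] m ≠
        ![C.p1 i, C.p2 i, C.w (i+1), C.w (i+2), C.w (i+3), C.w (i+4)] n) ∧
      ¬ S.Collinear (![C.p1 i, C.p2 i, C.w (i+1), C.w (i+2), C.w (i+3), C.w (i+4)] m)
        (![C.p1 i, C.p2 i, C.w (i+1), C.w (i+2), C.w (i+3), C.w (i+4)] n) := by
    intro m n hmn
    have hsymm : ∀ {u v : P}, (u ≠ v ∧ ¬ S.Collinear u v) → (v ≠ u ∧ ¬ S.Collinear v u) :=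
      fun h => ⟨h.1.symm, fun hc => h.2 (col_symm hc)⟩
    fin_cases m <;> fin_cases n <;>
      simp only [Matrix.cons_val_zero, Matrix.cons_val_one, Matrix.head_cons,
        Matrix.cons_val_two, Matrix.tail_cons, Matrix.cons_val_three, Matrix.cons_val_four,
        Matrix.cons_val_succ] <;>
      first
        | exact absurd rfl hmn
        | exact hP12
        | exact hsymm hP12
        | exact hWP1 _ (hia _ (by decide))
        | exact hsymm (hWP1 _ (hia _ (by decide)))
        | exact hWP2 _ (hia _ (by decide))
        | exact hsymm (hWP2 _ (hia _ (by decide)))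
        | exact hWW _ _ (hiab _ _ (by decide))
  refine six_nbrs hGQ _ hcol (fun m n hmn => ?_)
  exact lineOf_ne_of hGQ (hcol m) (hcol n) (hpair m n hmn).1 (hpair m n hmn).2

end Cfg

lemma cons_val_five {α : Type*} (a b c d e f : α) : ![a,b,c,d,e,f] 5 = f := rfl

end SlimPLS

/-- A faithful representation group of the `(2,4)`-GQ has order `2^6`. -/
theorem gq24_faithful_rep_card {P : Type*} (S : SlimPLS P)
    (hGQ : S.IsGQ 4) {R : Type*} [Group R] (ρ : S.Rep R)
    (hf : Function.Injective ρ.r) :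
    Nat.card R = 2 ^ 6 := by
  classical
  obtain ⟨x0⟩ := S.nonempty_pts
  obtain ⟨y0, hy0ne, hy0⟩ := hGQ.2.1 x0
  obtain ⟨w, hwinj, hwx, hwy, hcov⟩ := SlimPLS.perp_enum hGQ hy0 (Ne.symm hy0ne)
  set C : SlimPLS.Cfg S := ⟨x0, y0, w, Ne.symm hy0ne, hy0, hwinj, hwx, hwy, hcov⟩ with hCdef
  have hcomm : ∀ a b : R, a * b = b * a := SlimPLS.R_comm hGQ ρ ρ.gen
  letI : CommGroup R := { ‹Group R› with mul_comm := hcomm }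
  have hsq : ∀ p : P, ρ.r p * ρ.r p = 1 := by
    intro p
    have h := pow_orderOf_eq_one (ρ.r p)
    rw [ρ.order_two p, pow_two] at h
    exact h
  have hne1 : ∀ p : P, ρ.r p ≠ 1 := by
    intro p h
    have h2 := ρ.order_two p
    rw [h, orderOf_one] at h2
    norm_num at h2
  have hinv : ∀ p : P, (ρ.r p)⁻¹ = ρ.r p := fun p => inv_eq_of_mul_eq_one_right (hsq p)
  have hne2 : ∀ p q : P, p ≠ q → ρ.r p * ρ.r q ≠ 1 := by
    intro p q hpq h
    have h3 := eq_inv_of_mul_eq_one_left h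
    rw [hinv] at h3
    exact hpq (hf h3)
  have hv0 : (0 : ZMod 2).val = 0 := rfl
  have hv1 : (1 : ZMod 2).val = 1 := rfl
  set gv : Fin 6 → R := ![ρ.r C.x, ρ.r C.y, ρ.r (C.w 0), ρ.r (C.w 1), ρ.r (C.w 2), ρ.r (C.w 3)]
    with hgv
  have hgsq : ∀ m : Fin 6, gv m * gv m = 1 := by
    intro m
    fin_cases m <;>
      simp only [hgv, Matrix.cons_val_zero, Matrix.cons_val_one, Matrix.head_cons,
        Matrix.cons_val_two, Matrix.tail_cons, Matrix.cons_val_three, Matrix.cons_val_four,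
        Matrix.cons_val_succ] <;>
      exact hsq _
  have hpow : ∀ (a : R), a * a = 1 → ∀ s t : ZMod 2, a ^ (s + t).val = a ^ s.val * a ^ t.val := by
    intro a ha s t
    have hb : ∀ u : ZMod 2, u = 0 ∨ u = 1 := by decide
    rcases hb s with rfl | rfl <;> rcases hb t with rfl | rfl
    · norm_num
    · norm_num
    · norm_num
    · have h11 : ((1 : ZMod 2) + 1).val = 0 := rfl
      rw [h11, hv1, pow_zero, pow_one, ha]
  have hadd : ∀ c d : Fin 6 → ZMod 2,
      (∏ m, gv m ^ ((c + d) m).val) = (∏ m, gv m ^ (c m).val) * (∏ m, gv m ^ (d m).val) := by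
    intro c d
    rw [← Finset.prod_mul_distrib]
    exact Finset.prod_congr rfl fun m _ => hpow (gv m) (hgsq m) (c m) (d m)
  set φ : Multiplicative (Fin 6 → ZMod 2) →* R :=
    MonoidHom.mk' (fun c => ∏ m, gv m ^ ((Multiplicative.toAdd c) m).val) (fun a b => hadd _ _)
    with hphi
  have hφeval : ∀ v : Fin 6 → ZMod 2, φ (Multiplicative.ofAdd v) = ∏ m, gv m ^ (v m).val :=
    fun v => rfl
  have hvp1 : ∀ i, ρ.r (C.p1 i) = ρ.r C.x * ρ.r (C.w i) :=
    fun i => (SlimPLS.rep_mul ρ (C.hwx i)).symm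
  have hvp2 : ∀ i, ρ.r (C.p2 i) = ρ.r C.y * ρ.r (C.w i) :=
    fun i => (SlimPLS.rep_mul ρ (C.hwy i)).symm
  have hvq : ∀ i j, i ≠ j →
      ρ.r (C.q i j) = ρ.r C.x * ρ.r (C.w i) * (ρ.r C.y * ρ.r (C.w j)) := by
    intro i j hij
    have h1 : ρ.r (C.p1 i) * ρ.r (C.p2 j) = ρ.r (C.q i j) :=
      SlimPLS.rep_mul ρ (SlimPLS.Cfg.col_p1_p2 C hGQ hij)
    rw [← h1, hvp1 i, hvp2 j]
  have hw4 : ρ.r (C.w 4) = ρ.r (C.w 0) * ρ.r (C.w 1) * ρ.r (C.w 2) * ρ.r (C.w 3) := by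
    have hrel := SlimPLS.Cfg.rel_w C hGQ (a := 0) (b := 1) (c := 2) (d := 3) (e := 4)
      (by decide) (by decide) (by decide) (by decide) (by decide) (by decide)
      (by decide) (by decide) (by decide) (by decide)
    have hstar := SlimPLS.rep_mul ρ (SlimPLS.Cfg.col_q_q C hGQ (a := 0) (b := 1) (c := 2) (d := 3)
      (by decide) (by decide) (by decide) (by decide) (by decide) (by decide))
    rw [← hrel] at hstar
    rw [hvq 0 1 (by decide), hvq 2 3 (by decide)] at hstar
    rw [← hstar]
    calc ρ.r C.x * ρ.r (C.w 0) * (ρ.r C.y * ρ.r (C.w 1)) *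
          (ρ.r C.x * ρ.r (C.w 2) * (ρ.r C.y * ρ.r (C.w 3)))
        = ρ.r C.x * ρ.r C.x *
            (ρ.r C.y * ρ.r C.y * (ρ.r (C.w 0) * ρ.r (C.w 1) * ρ.r (C.w 2) * ρ.r (C.w 3))) := by
          ac_rfl
      _ = ρ.r (C.w 0) * ρ.r (C.w 1) * ρ.r (C.w 2) * ρ.r (C.w 3) := by
          rw [hsq C.x, hsq C.y, one_mul, one_mul]
  have hmem : ∀ (v : Fin 6 → ZMod 2) (p : P),
      ρ.r p = (∏ m, gv m ^ (v m).val) → ρ.r p ∈ φ.range :=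
    fun v p h => ⟨Multiplicative.ofAdd v, ((hφeval v).trans h.symm)⟩
  have hrange : ∀ r : R, r ∈ φ.range := by
    intro r
    have hle : Subgroup.closure (Set.range ρ.r) ≤ φ.range := by
      rw [Subgroup.closure_le]
      rintro _ ⟨p, rfl⟩
      by_cases hpx : p = C.x
      case pos =>
        subst hpx
        refine hmem ![1,0,0,0,0,0] _ ?_
        show ρ.r C.x = ∏ m, gv m ^ ((![1,0,0,0,0,0] : Fin 6 → ZMod 2) m).val
        simp only [hgv, Fin.prod_univ_six, Matrix.cons_val_zero, Matrix.cons_val_one, Matrix.head_cons,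
            Matrix.cons_val_two, Matrix.tail_cons, Matrix.cons_val_three, Matrix.cons_val_four,
            Matrix.cons_val_succ, SlimPLS.cons_val_five, hv0, hv1, pow_zero, pow_one, one_mul, mul_one]
        all_goals ac_rfl
      by_cases hpy : p = C.y
      case pos =>
        subst hpy
        refine hmem ![0,1,0,0,0,0] _ ?_
        show ρ.r C.y = ∏ m, gv m ^ ((![0,1,0,0,0,0] : Fin 6 → ZMod 2) m).val
        simp only [hgv, Fin.prod_univ_six, Matrix.cons_val_zero, Matrix.cons_val_one, Matrix.head_cons,
            Matrix.cons_val_two, Matrix.tail_cons, Matrix.cons_val_three, Matrix.cons_val_four,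
            Matrix.cons_val_succ, SlimPLS.cons_val_five, hv0, hv1, pow_zero, pow_one, one_mul, mul_one]
        all_goals ac_rfl
      by_cases hcx : S.Collinear C.x p
      case pos =>
        obtain ⟨k, hk | hk⟩ := SlimPLS.Cfg.nbrx_char C hGQ p hcx
        · subst hk
          fin_cases k
          · refine hmem ![0,0,1,0,0,0] _ ?_
            show ρ.r (C.w 0) = ∏ m, gv m ^ ((![0,0,1,0,0,0] : Fin 6 → ZMod 2) m).val
            simp only [hgv, Fin.prod_univ_six, Matrix.cons_val_zero, Matrix.cons_val_one, Matrix.head_cons,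
              Matrix.cons_val_two, Matrix.tail_cons, Matrix.cons_val_three, Matrix.cons_val_four,
              Matrix.cons_val_succ, SlimPLS.cons_val_five, hv0, hv1, pow_zero, pow_one, one_mul, mul_one]
            all_goals ac_rfl
          · refine hmem ![0,0,0,1,0,0] _ ?_
            show ρ.r (C.w 1) = ∏ m, gv m ^ ((![0,0,0,1,0,0] : Fin 6 → ZMod 2) m).val
            simp only [hgv, Fin.prod_univ_six, Matrix.cons_val_zero, Matrix.cons_val_one, Matrix.head_cons,
              Matrix.cons_val_two, Matrix.tail_cons, Matrix.cons_val_three, Matrix.cons_val_four,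
              Matrix.cons_val_succ, SlimPLS.cons_val_five, hv0, hv1, pow_zero, pow_one, one_mul, mul_one]
            all_goals ac_rfl
          · refine hmem ![0,0,0,0,1,0] _ ?_
            show ρ.r (C.w 2) = ∏ m, gv m ^ ((![0,0,0,0,1,0] : Fin 6 → ZMod 2) m).val
            simp only [hgv, Fin.prod_univ_six, Matrix.cons_val_zero, Matrix.cons_val_one, Matrix.head_cons,
              Matrix.cons_val_two, Matrix.tail_cons, Matrix.cons_val_three, Matrix.cons_val_four,
              Matrix.cons_val_succ, SlimPLS.cons_val_five, hv0, hv1, pow_zero, pow_one, one_mul, mul_one]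
            all_goals ac_rfl
          · refine hmem ![0,0,0,0,0,1] _ ?_
            show ρ.r (C.w 3) = ∏ m, gv m ^ ((![0,0,0,0,0,1] : Fin 6 → ZMod 2) m).val
            simp only [hgv, Fin.prod_univ_six, Matrix.cons_val_zero, Matrix.cons_val_one, Matrix.head_cons,
              Matrix.cons_val_two, Matrix.tail_cons, Matrix.cons_val_three, Matrix.cons_val_four,
              Matrix.cons_val_succ, SlimPLS.cons_val_five, hv0, hv1, pow_zero, pow_one, one_mul, mul_one]
            all_goals ac_rfl
          · refine hmem ![0,0,1,1,1,1] _ ?_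
            show ρ.r (C.w 4) = ∏ m, gv m ^ ((![0,0,1,1,1,1] : Fin 6 → ZMod 2) m).val
            rw [hw4]
            simp only [hgv, Fin.prod_univ_six, Matrix.cons_val_zero, Matrix.cons_val_one, Matrix.head_cons,
              Matrix.cons_val_two, Matrix.tail_cons, Matrix.cons_val_three, Matrix.cons_val_four,
              Matrix.cons_val_succ, SlimPLS.cons_val_five, hv0, hv1, pow_zero, pow_one, one_mul, mul_one]
            all_goals ac_rfl
        · subst hk
          fin_cases k
          · refine hmem ![1,0,1,0,0,0] _ ?_
            show ρ.r (C.p1 0) = ∏ m, gv m ^ ((![1,0,1,0,0,0] : Fin 6 → ZMod 2) m).val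
            rw [hvp1 0]
            simp only [hgv, Fin.prod_univ_six, Matrix.cons_val_zero, Matrix.cons_val_one, Matrix.head_cons,
              Matrix.cons_val_two, Matrix.tail_cons, Matrix.cons_val_three, Matrix.cons_val_four,
              Matrix.cons_val_succ, SlimPLS.cons_val_five, hv0, hv1, pow_zero, pow_one, one_mul, mul_one]
            all_goals ac_rfl
          · refine hmem ![1,0,0,1,0,0] _ ?_
            show ρ.r (C.p1 1) = ∏ m, gv m ^ ((![1,0,0,1,0,0] : Fin 6 → ZMod 2) m).val
            rw [hvp1 1]
            simp only [hgv, Fin.prod_univ_six, Matrix.cons_val_zero, Matrix.cons_val_one, Matrix.head_cons,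
              Matrix.cons_val_two, Matrix.tail_cons, Matrix.cons_val_three, Matrix.cons_val_four,
              Matrix.cons_val_succ, SlimPLS.cons_val_five, hv0, hv1, pow_zero, pow_one, one_mul, mul_one]
            all_goals ac_rfl
          · refine hmem ![1,0,0,0,1,0] _ ?_
            show ρ.r (C.p1 2) = ∏ m, gv m ^ ((![1,0,0,0,1,0] : Fin 6 → ZMod 2) m).val
            rw [hvp1 2]
            simp only [hgv, Fin.prod_univ_six, Matrix.cons_val_zero, Matrix.cons_val_one, Matrix.head_cons,
              Matrix.cons_val_two, Matrix.tail_cons, Matrix.cons_val_three, Matrix.cons_val_four,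
              Matrix.cons_val_succ, SlimPLS.cons_val_five, hv0, hv1, pow_zero, pow_one, one_mul, mul_one]
            all_goals ac_rfl
          · refine hmem ![1,0,0,0,0,1] _ ?_
            show ρ.r (C.p1 3) = ∏ m, gv m ^ ((![1,0,0,0,0,1] : Fin 6 → ZMod 2) m).val
            rw [hvp1 3]
            simp only [hgv, Fin.prod_univ_six, Matrix.cons_val_zero, Matrix.cons_val_one, Matrix.head_cons,
              Matrix.cons_val_two, Matrix.tail_cons, Matrix.cons_val_three, Matrix.cons_val_four,
              Matrix.cons_val_succ, SlimPLS.cons_val_five, hv0, hv1, pow_zero, pow_one, one_mul, mul_one]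
            all_goals ac_rfl
          · refine hmem ![1,0,1,1,1,1] _ ?_
            show ρ.r (C.p1 4) = ∏ m, gv m ^ ((![1,0,1,1,1,1] : Fin 6 → ZMod 2) m).val
            rw [hvp1 4, hw4]
            simp only [hgv, Fin.prod_univ_six, Matrix.cons_val_zero, Matrix.cons_val_one, Matrix.head_cons,
              Matrix.cons_val_two, Matrix.tail_cons, Matrix.cons_val_three, Matrix.cons_val_four,
              Matrix.cons_val_succ, SlimPLS.cons_val_five, hv0, hv1, pow_zero, pow_one, one_mul, mul_one]
            all_goals ac_rfl
      by_cases hcy : S.Collinear C.y p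
      case pos =>
        obtain ⟨k, hk | hk⟩ := SlimPLS.Cfg.nbry_char C hGQ p hcy
        · subst hk
          fin_cases k
          · refine hmem ![0,0,1,0,0,0] _ ?_
            show ρ.r (C.w 0) = ∏ m, gv m ^ ((![0,0,1,0,0,0] : Fin 6 → ZMod 2) m).val
            simp only [hgv, Fin.prod_univ_six, Matrix.cons_val_zero, Matrix.cons_val_one, Matrix.head_cons,
              Matrix.cons_val_two, Matrix.tail_cons, Matrix.cons_val_three, Matrix.cons_val_four,
              Matrix.cons_val_succ, SlimPLS.cons_val_five, hv0, hv1, pow_zero, pow_one, one_mul, mul_one]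
            all_goals ac_rfl
          · refine hmem ![0,0,0,1,0,0] _ ?_
            show ρ.r (C.w 1) = ∏ m, gv m ^ ((![0,0,0,1,0,0] : Fin 6 → ZMod 2) m).val
            simp only [hgv, Fin.prod_univ_six, Matrix.cons_val_zero, Matrix.cons_val_one, Matrix.head_cons,
              Matrix.cons_val_two, Matrix.tail_cons, Matrix.cons_val_three, Matrix.cons_val_four,
              Matrix.cons_val_succ, SlimPLS.cons_val_five, hv0, hv1, pow_zero, pow_one, one_mul, mul_one]
            all_goals ac_rfl
          · refine hmem ![0,0,0,0,1,0] _ ?_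
            show ρ.r (C.w 2) = ∏ m, gv m ^ ((![0,0,0,0,1,0] : Fin 6 → ZMod 2) m).val
            simp only [hgv, Fin.prod_univ_six, Matrix.cons_val_zero, Matrix.cons_val_one, Matrix.head_cons,
              Matrix.cons_val_two, Matrix.tail_cons, Matrix.cons_val_three, Matrix.cons_val_four,
              Matrix.cons_val_succ, SlimPLS.cons_val_five, hv0, hv1, pow_zero, pow_one, one_mul, mul_one]
            all_goals ac_rfl
          · refine hmem ![0,0,0,0,0,1] _ ?_
            show ρ.r (C.w 3) = ∏ m, gv m ^ ((![0,0,0,0,0,1] : Fin 6 → ZMod 2) m).val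
            simp only [hgv, Fin.prod_univ_six, Matrix.cons_val_zero, Matrix.cons_val_one, Matrix.head_cons,
              Matrix.cons_val_two, Matrix.tail_cons, Matrix.cons_val_three, Matrix.cons_val_four,
              Matrix.cons_val_succ, SlimPLS.cons_val_five, hv0, hv1, pow_zero, pow_one, one_mul, mul_one]
            all_goals ac_rfl
          · refine hmem ![0,0,1,1,1,1] _ ?_
            show ρ.r (C.w 4) = ∏ m, gv m ^ ((![0,0,1,1,1,1] : Fin 6 → ZMod 2) m).val
            rw [hw4]
            simp only [hgv, Fin.prod_univ_six, Matrix.cons_val_zero, Matrix.cons_val_one, Matrix.head_cons,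
              Matrix.cons_val_two, Matrix.tail_cons, Matrix.cons_val_three, Matrix.cons_val_four,
              Matrix.cons_val_succ, SlimPLS.cons_val_five, hv0, hv1, pow_zero, pow_one, one_mul, mul_one]
            all_goals ac_rfl
        · subst hk
          fin_cases k
          · refine hmem ![0,1,1,0,0,0] _ ?_
            show ρ.r (C.p2 0) = ∏ m, gv m ^ ((![0,1,1,0,0,0] : Fin 6 → ZMod 2) m).val
            rw [hvp2 0]
            simp only [hgv, Fin.prod_univ_six, Matrix.cons_val_zero, Matrix.cons_val_one, Matrix.head_cons,
              Matrix.cons_val_two, Matrix.tail_cons, Matrix.cons_val_three, Matrix.cons_val_four,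
              Matrix.cons_val_succ, SlimPLS.cons_val_five, hv0, hv1, pow_zero, pow_one, one_mul, mul_one]
            all_goals ac_rfl
          · refine hmem ![0,1,0,1,0,0] _ ?_
            show ρ.r (C.p2 1) = ∏ m, gv m ^ ((![0,1,0,1,0,0] : Fin 6 → ZMod 2) m).val
            rw [hvp2 1]
            simp only [hgv, Fin.prod_univ_six, Matrix.cons_val_zero, Matrix.cons_val_one, Matrix.head_cons,
              Matrix.cons_val_two, Matrix.tail_cons, Matrix.cons_val_three, Matrix.cons_val_four,
              Matrix.cons_val_succ, SlimPLS.cons_val_five, hv0, hv1, pow_zero, pow_one, one_mul, mul_one]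
            all_goals ac_rfl
          · refine hmem ![0,1,0,0,1,0] _ ?_
            show ρ.r (C.p2 2) = ∏ m, gv m ^ ((![0,1,0,0,1,0] : Fin 6 → ZMod 2) m).val
            rw [hvp2 2]
            simp only [hgv, Fin.prod_univ_six, Matrix.cons_val_zero, Matrix.cons_val_one, Matrix.head_cons,
              Matrix.cons_val_two, Matrix.tail_cons, Matrix.cons_val_three, Matrix.cons_val_four,
              Matrix.cons_val_succ, SlimPLS.cons_val_five, hv0, hv1, pow_zero, pow_one, one_mul, mul_one]
            all_goals ac_rfl
          · refine hmem ![0,1,0,0,0,1] _ ?_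
            show ρ.r (C.p2 3) = ∏ m, gv m ^ ((![0,1,0,0,0,1] : Fin 6 → ZMod 2) m).val
            rw [hvp2 3]
            simp only [hgv, Fin.prod_univ_six, Matrix.cons_val_zero, Matrix.cons_val_one, Matrix.head_cons,
              Matrix.cons_val_two, Matrix.tail_cons, Matrix.cons_val_three, Matrix.cons_val_four,
              Matrix.cons_val_succ, SlimPLS.cons_val_five, hv0, hv1, pow_zero, pow_one, one_mul, mul_one]
            all_goals ac_rfl
          · refine hmem ![0,1,1,1,1,1] _ ?_
            show ρ.r (C.p2 4) = ∏ m, gv m ^ ((![0,1,1,1,1,1] : Fin 6 → ZMod 2) m).val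
            rw [hvp2 4, hw4]
            simp only [hgv, Fin.prod_univ_six, Matrix.cons_val_zero, Matrix.cons_val_one, Matrix.head_cons,
              Matrix.cons_val_two, Matrix.tail_cons, Matrix.cons_val_three, Matrix.cons_val_four,
              Matrix.cons_val_succ, SlimPLS.cons_val_five, hv0, hv1, pow_zero, pow_one, one_mul, mul_one]
            all_goals ac_rfl
      obtain ⟨i, j, hij, hq⟩ := SlimPLS.Cfg.classify C hGQ hpx hpy hcx hcy
      subst hq
      fin_cases i <;> fin_cases j
      · exact absurd rfl hij
      · refine hmem ![1,1,1,1,0,0] _ ?_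
        show ρ.r (C.q 0 1) = ∏ m, gv m ^ ((![1,1,1,1,0,0] : Fin 6 → ZMod 2) m).val
        rw [hvq 0 1 (by decide)]
        simp only [hgv, Fin.prod_univ_six, Matrix.cons_val_zero, Matrix.cons_val_one, Matrix.head_cons,
              Matrix.cons_val_two, Matrix.tail_cons, Matrix.cons_val_three, Matrix.cons_val_four,
              Matrix.cons_val_succ, SlimPLS.cons_val_five, hv0, hv1, pow_zero, pow_one, one_mul, mul_one]
        all_goals ac_rfl
      · refine hmem ![1,1,1,0,1,0] _ ?_
        show ρ.r (C.q 0 2) = ∏ m, gv m ^ ((![1,1,1,0,1,0] : Fin 6 → ZMod 2) m).val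
        rw [hvq 0 2 (by decide)]
        simp only [hgv, Fin.prod_univ_six, Matrix.cons_val_zero, Matrix.cons_val_one, Matrix.head_cons,
              Matrix.cons_val_two, Matrix.tail_cons, Matrix.cons_val_three, Matrix.cons_val_four,
              Matrix.cons_val_succ, SlimPLS.cons_val_five, hv0, hv1, pow_zero, pow_one, one_mul, mul_one]
        all_goals ac_rfl
      · refine hmem ![1,1,1,0,0,1] _ ?_
        show ρ.r (C.q 0 3) = ∏ m, gv m ^ ((![1,1,1,0,0,1] : Fin 6 → ZMod 2) m).val
        rw [hvq 0 3 (by decide)]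
        simp only [hgv, Fin.prod_univ_six, Matrix.cons_val_zero, Matrix.cons_val_one, Matrix.head_cons,
              Matrix.cons_val_two, Matrix.tail_cons, Matrix.cons_val_three, Matrix.cons_val_four,
              Matrix.cons_val_succ, SlimPLS.cons_val_five, hv0, hv1, pow_zero, pow_one, one_mul, mul_one]
        all_goals ac_rfl
      · refine hmem ![1,1,0,1,1,1] _ ?_
        show ρ.r (C.q 0 4) = ∏ m, gv m ^ ((![1,1,0,1,1,1] : Fin 6 → ZMod 2) m).val
        rw [hvq 0 4 (by decide), hw4]
        rw [show ρ.r C.x * ρ.r (C.w 0) * (ρ.r C.y * (ρ.r (C.w 0) * ρ.r (C.w 1) * ρ.r (C.w 2) * ρ.r (C.w 3))) = (ρ.r (C.w 0) * ρ.r (C.w 0)) * (ρ.r C.x * ρ.r C.y * ρ.r (C.w 1) * ρ.r (C.w 2) * ρ.r (C.w 3)) from by ac_rfl, hsq (C.w 0), one_mul]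
        simp only [hgv, Fin.prod_univ_six, Matrix.cons_val_zero, Matrix.cons_val_one, Matrix.head_cons,
              Matrix.cons_val_two, Matrix.tail_cons, Matrix.cons_val_three, Matrix.cons_val_four,
              Matrix.cons_val_succ, SlimPLS.cons_val_five, hv0, hv1, pow_zero, pow_one, one_mul, mul_one]
        all_goals ac_rfl
      · refine hmem ![1,1,1,1,0,0] _ ?_
        show ρ.r (C.q 1 0) = ∏ m, gv m ^ ((![1,1,1,1,0,0] : Fin 6 → ZMod 2) m).val
        rw [hvq 1 0 (by decide)]
        simp only [hgv, Fin.prod_univ_six, Matrix.cons_val_zero, Matrix.cons_val_one, Matrix.head_cons,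
              Matrix.cons_val_two, Matrix.tail_cons, Matrix.cons_val_three, Matrix.cons_val_four,
              Matrix.cons_val_succ, SlimPLS.cons_val_five, hv0, hv1, pow_zero, pow_one, one_mul, mul_one]
        all_goals ac_rfl
      · exact absurd rfl hij
      · refine hmem ![1,1,0,1,1,0] _ ?_
        show ρ.r (C.q 1 2) = ∏ m, gv m ^ ((![1,1,0,1,1,0] : Fin 6 → ZMod 2) m).val
        rw [hvq 1 2 (by decide)]
        simp only [hgv, Fin.prod_univ_six, Matrix.cons_val_zero, Matrix.cons_val_one, Matrix.head_cons,
              Matrix.cons_val_two, Matrix.tail_cons, Matrix.cons_val_three, Matrix.cons_val_four,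
              Matrix.cons_val_succ, SlimPLS.cons_val_five, hv0, hv1, pow_zero, pow_one, one_mul, mul_one]
        all_goals ac_rfl
      · refine hmem ![1,1,0,1,0,1] _ ?_
        show ρ.r (C.q 1 3) = ∏ m, gv m ^ ((![1,1,0,1,0,1] : Fin 6 → ZMod 2) m).val
        rw [hvq 1 3 (by decide)]
        simp only [hgv, Fin.prod_univ_six, Matrix.cons_val_zero, Matrix.cons_val_one, Matrix.head_cons,
              Matrix.cons_val_two, Matrix.tail_cons, Matrix.cons_val_three, Matrix.cons_val_four,
              Matrix.cons_val_succ, SlimPLS.cons_val_five, hv0, hv1, pow_zero, pow_one, one_mul, mul_one]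
        all_goals ac_rfl
      · refine hmem ![1,1,1,0,1,1] _ ?_
        show ρ.r (C.q 1 4) = ∏ m, gv m ^ ((![1,1,1,0,1,1] : Fin 6 → ZMod 2) m).val
        rw [hvq 1 4 (by decide), hw4]
        rw [show ρ.r C.x * ρ.r (C.w 1) * (ρ.r C.y * (ρ.r (C.w 0) * ρ.r (C.w 1) * ρ.r (C.w 2) * ρ.r (C.w 3))) = (ρ.r (C.w 1) * ρ.r (C.w 1)) * (ρ.r C.x * ρ.r C.y * ρ.r (C.w 0) * ρ.r (C.w 2) * ρ.r (C.w 3)) from by ac_rfl, hsq (C.w 1), one_mul]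
        simp only [hgv, Fin.prod_univ_six, Matrix.cons_val_zero, Matrix.cons_val_one, Matrix.head_cons,
              Matrix.cons_val_two, Matrix.tail_cons, Matrix.cons_val_three, Matrix.cons_val_four,
              Matrix.cons_val_succ, SlimPLS.cons_val_five, hv0, hv1, pow_zero, pow_one, one_mul, mul_one]
        all_goals ac_rfl
      · refine hmem ![1,1,1,0,1,0] _ ?_
        show ρ.r (C.q 2 0) = ∏ m, gv m ^ ((![1,1,1,0,1,0] : Fin 6 → ZMod 2) m).val
        rw [hvq 2 0 (by decide)]
        simp only [hgv, Fin.prod_univ_six, Matrix.cons_val_zero, Matrix.cons_val_one, Matrix.head_cons,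
              Matrix.cons_val_two, Matrix.tail_cons, Matrix.cons_val_three, Matrix.cons_val_four,
              Matrix.cons_val_succ, SlimPLS.cons_val_five, hv0, hv1, pow_zero, pow_one, one_mul, mul_one]
        all_goals ac_rfl
      · refine hmem ![1,1,0,1,1,0] _ ?_
        show ρ.r (C.q 2 1) = ∏ m, gv m ^ ((![1,1,0,1,1,0] : Fin 6 → ZMod 2) m).val
        rw [hvq 2 1 (by decide)]
        simp only [hgv, Fin.prod_univ_six, Matrix.cons_val_zero, Matrix.cons_val_one, Matrix.head_cons,
              Matrix.cons_val_two, Matrix.tail_cons, Matrix.cons_val_three, Matrix.cons_val_four,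
              Matrix.cons_val_succ, SlimPLS.cons_val_five, hv0, hv1, pow_zero, pow_one, one_mul, mul_one]
        all_goals ac_rfl
      · exact absurd rfl hij
      · refine hmem ![1,1,0,0,1,1] _ ?_
        show ρ.r (C.q 2 3) = ∏ m, gv m ^ ((![1,1,0,0,1,1] : Fin 6 → ZMod 2) m).val
        rw [hvq 2 3 (by decide)]
        simp only [hgv, Fin.prod_univ_six, Matrix.cons_val_zero, Matrix.cons_val_one, Matrix.head_cons,
              Matrix.cons_val_two, Matrix.tail_cons, Matrix.cons_val_three, Matrix.cons_val_four,
              Matrix.cons_val_succ, SlimPLS.cons_val_five, hv0, hv1, pow_zero, pow_one, one_mul, mul_one]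
        all_goals ac_rfl
      · refine hmem ![1,1,1,1,0,1] _ ?_
        show ρ.r (C.q 2 4) = ∏ m, gv m ^ ((![1,1,1,1,0,1] : Fin 6 → ZMod 2) m).val
        rw [hvq 2 4 (by decide), hw4]
        rw [show ρ.r C.x * ρ.r (C.w 2) * (ρ.r C.y * (ρ.r (C.w 0) * ρ.r (C.w 1) * ρ.r (C.w 2) * ρ.r (C.w 3))) = (ρ.r (C.w 2) * ρ.r (C.w 2)) * (ρ.r C.x * ρ.r C.y * ρ.r (C.w 0) * ρ.r (C.w 1) * ρ.r (C.w 3)) from by ac_rfl, hsq (C.w 2), one_mul]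
        simp only [hgv, Fin.prod_univ_six, Matrix.cons_val_zero, Matrix.cons_val_one, Matrix.head_cons,
              Matrix.cons_val_two, Matrix.tail_cons, Matrix.cons_val_three, Matrix.cons_val_four,
              Matrix.cons_val_succ, SlimPLS.cons_val_five, hv0, hv1, pow_zero, pow_one, one_mul, mul_one]
        all_goals ac_rfl
      · refine hmem ![1,1,1,0,0,1] _ ?_
        show ρ.r (C.q 3 0) = ∏ m, gv m ^ ((![1,1,1,0,0,1] : Fin 6 → ZMod 2) m).val
        rw [hvq 3 0 (by decide)]
        simp only [hgv, Fin.prod_univ_six, Matrix.cons_val_zero, Matrix.cons_val_one, Matrix.head_cons,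
              Matrix.cons_val_two, Matrix.tail_cons, Matrix.cons_val_three, Matrix.cons_val_four,
              Matrix.cons_val_succ, SlimPLS.cons_val_five, hv0, hv1, pow_zero, pow_one, one_mul, mul_one]
        all_goals ac_rfl
      · refine hmem ![1,1,0,1,0,1] _ ?_
        show ρ.r (C.q 3 1) = ∏ m, gv m ^ ((![1,1,0,1,0,1] : Fin 6 → ZMod 2) m).val
        rw [hvq 3 1 (by decide)]
        simp only [hgv, Fin.prod_univ_six, Matrix.cons_val_zero, Matrix.cons_val_one, Matrix.head_cons,
              Matrix.cons_val_two, Matrix.tail_cons, Matrix.cons_val_three, Matrix.cons_val_four,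
              Matrix.cons_val_succ, SlimPLS.cons_val_five, hv0, hv1, pow_zero, pow_one, one_mul, mul_one]
        all_goals ac_rfl
      · refine hmem ![1,1,0,0,1,1] _ ?_
        show ρ.r (C.q 3 2) = ∏ m, gv m ^ ((![1,1,0,0,1,1] : Fin 6 → ZMod 2) m).val
        rw [hvq 3 2 (by decide)]
        simp only [hgv, Fin.prod_univ_six, Matrix.cons_val_zero, Matrix.cons_val_one, Matrix.head_cons,
              Matrix.cons_val_two, Matrix.tail_cons, Matrix.cons_val_three, Matrix.cons_val_four,
              Matrix.cons_val_succ, SlimPLS.cons_val_five, hv0, hv1, pow_zero, pow_one, one_mul, mul_one]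
        all_goals ac_rfl
      · exact absurd rfl hij
      · refine hmem ![1,1,1,1,1,0] _ ?_
        show ρ.r (C.q 3 4) = ∏ m, gv m ^ ((![1,1,1,1,1,0] : Fin 6 → ZMod 2) m).val
        rw [hvq 3 4 (by decide), hw4]
        rw [show ρ.r C.x * ρ.r (C.w 3) * (ρ.r C.y * (ρ.r (C.w 0) * ρ.r (C.w 1) * ρ.r (C.w 2) * ρ.r (C.w 3))) = (ρ.r (C.w 3) * ρ.r (C.w 3)) * (ρ.r C.x * ρ.r C.y * ρ.r (C.w 0) * ρ.r (C.w 1) * ρ.r (C.w 2)) from by ac_rfl, hsq (C.w 3), one_mul]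
        simp only [hgv, Fin.prod_univ_six, Matrix.cons_val_zero, Matrix.cons_val_one, Matrix.head_cons,
              Matrix.cons_val_two, Matrix.tail_cons, Matrix.cons_val_three, Matrix.cons_val_four,
              Matrix.cons_val_succ, SlimPLS.cons_val_five, hv0, hv1, pow_zero, pow_one, one_mul, mul_one]
        all_goals ac_rfl
      · refine hmem ![1,1,0,1,1,1] _ ?_
        show ρ.r (C.q 4 0) = ∏ m, gv m ^ ((![1,1,0,1,1,1] : Fin 6 → ZMod 2) m).val
        rw [hvq 4 0 (by decide), hw4]
        rw [show ρ.r C.x * (ρ.r (C.w 0) * ρ.r (C.w 1) * ρ.r (C.w 2) * ρ.r (C.w 3)) * (ρ.r C.y * ρ.r (C.w 0)) = (ρ.r (C.w 0) * ρ.r (C.w 0)) * (ρ.r C.x * ρ.r C.y * ρ.r (C.w 1) * ρ.r (C.w 2) * ρ.r (C.w 3)) from by ac_rfl, hsq (C.w 0), one_mul]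
        simp only [hgv, Fin.prod_univ_six, Matrix.cons_val_zero, Matrix.cons_val_one, Matrix.head_cons,
              Matrix.cons_val_two, Matrix.tail_cons, Matrix.cons_val_three, Matrix.cons_val_four,
              Matrix.cons_val_succ, SlimPLS.cons_val_five, hv0, hv1, pow_zero, pow_one, one_mul, mul_one]
        all_goals ac_rfl
      · refine hmem ![1,1,1,0,1,1] _ ?_
        show ρ.r (C.q 4 1) = ∏ m, gv m ^ ((![1,1,1,0,1,1] : Fin 6 → ZMod 2) m).val
        rw [hvq 4 1 (by decide), hw4]
        rw [show ρ.r C.x * (ρ.r (C.w 0) * ρ.r (C.w 1) * ρ.r (C.w 2) * ρ.r (C.w 3)) * (ρ.r C.y * ρ.r (C.w 1)) = (ρ.r (C.w 1) * ρ.r (C.w 1)) * (ρ.r C.x * ρ.r C.y * ρ.r (C.w 0) * ρ.r (C.w 2) * ρ.r (C.w 3)) from by ac_rfl, hsq (C.w 1), one_mul]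
        simp only [hgv, Fin.prod_univ_six, Matrix.cons_val_zero, Matrix.cons_val_one, Matrix.head_cons,
              Matrix.cons_val_two, Matrix.tail_cons, Matrix.cons_val_three, Matrix.cons_val_four,
              Matrix.cons_val_succ, SlimPLS.cons_val_five, hv0, hv1, pow_zero, pow_one, one_mul, mul_one]
        all_goals ac_rfl
      · refine hmem ![1,1,1,1,0,1] _ ?_
        show ρ.r (C.q 4 2) = ∏ m, gv m ^ ((![1,1,1,1,0,1] : Fin 6 → ZMod 2) m).val
        rw [hvq 4 2 (by decide), hw4]
        rw [show ρ.r C.x * (ρ.r (C.w 0) * ρ.r (C.w 1) * ρ.r (C.w 2) * ρ.r (C.w 3)) * (ρ.r C.y * ρ.r (C.w 2)) = (ρ.r (C.w 2) * ρ.r (C.w 2)) * (ρ.r C.x * ρ.r C.y * ρ.r (C.w 0) * ρ.r (C.w 1) * ρ.r (C.w 3)) from by ac_rfl, hsq (C.w 2), one_mul]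
        simp only [hgv, Fin.prod_univ_six, Matrix.cons_val_zero, Matrix.cons_val_one, Matrix.head_cons,
              Matrix.cons_val_two, Matrix.tail_cons, Matrix.cons_val_three, Matrix.cons_val_four,
              Matrix.cons_val_succ, SlimPLS.cons_val_five, hv0, hv1, pow_zero, pow_one, one_mul, mul_one]
        all_goals ac_rfl
      · refine hmem ![1,1,1,1,1,0] _ ?_
        show ρ.r (C.q 4 3) = ∏ m, gv m ^ ((![1,1,1,1,1,0] : Fin 6 → ZMod 2) m).val
        rw [hvq 4 3 (by decide), hw4]
        rw [show ρ.r C.x * (ρ.r (C.w 0) * ρ.r (C.w 1) * ρ.r (C.w 2) * ρ.r (C.w 3)) * (ρ.r C.y * ρ.r (C.w 3)) = (ρ.r (C.w 3) * ρ.r (C.w 3)) * (ρ.r C.x * ρ.r C.y * ρ.r (C.w 0) * ρ.r (C.w 1) * ρ.r (C.w 2)) from by ac_rfl, hsq (C.w 3), one_mul]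
        simp only [hgv, Fin.prod_univ_six, Matrix.cons_val_zero, Matrix.cons_val_one, Matrix.head_cons,
              Matrix.cons_val_two, Matrix.tail_cons, Matrix.cons_val_three, Matrix.cons_val_four,
              Matrix.cons_val_succ, SlimPLS.cons_val_five, hv0, hv1, pow_zero, pow_one, one_mul, mul_one]
        all_goals ac_rfl
      · exact absurd rfl hij
    rw [ρ.gen] at hle
    exact hle trivial
  have hker : ∀ v : Fin 6 → ZMod 2, (∏ m, gv m ^ (v m).val) = 1 → v = 0 := by
    intro v hv
    have hb : ∀ u : ZMod 2, u = 0 ∨ u = 1 := by decide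
    rcases hb (v 0) with h0 | h0 <;> rcases hb (v 1) with h1 | h1 <;>
      rcases hb (v 2) with h2 | h2 <;> rcases hb (v 3) with h3 | h3 <;>
      rcases hb (v 4) with h4 | h4 <;> rcases hb (v 5) with h5 | h5 <;>
      (rw [Fin.prod_univ_six, h0, h1, h2, h3, h4, h5] at hv;
       simp only [hgv, Matrix.cons_val_zero, Matrix.cons_val_one, Matrix.head_cons,
         Matrix.cons_val_two, Matrix.tail_cons, Matrix.cons_val_three, Matrix.cons_val_four,
         Matrix.cons_val_succ, SlimPLS.cons_val_five, hv0, hv1, pow_zero, pow_one, one_mul,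
         mul_one] at hv)
    · funext m
      fin_cases m <;> simp only [Pi.zero_apply] <;> first | exact h0 | exact h1 | exact h2 | exact h3 | exact h4 | exact h5
    · exfalso
      have key : ρ.r (C.w 3) = 1 := by
        rw [← hv]
        all_goals ac_rfl
      exact hne1 _ key
    · exfalso
      have key : ρ.r (C.w 2) = 1 := by
        rw [← hv]
        all_goals ac_rfl
      exact hne1 _ key
    · exfalso
      have key : ρ.r (C.w 2) * ρ.r (C.w 3) = 1 := by
        rw [← hv]
        all_goals ac_rfl
      exact hne2 _ _ (C.hwinj.ne (by decide : (2:Fin 5) ≠ 3)) key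
    · exfalso
      have key : ρ.r (C.w 1) = 1 := by
        rw [← hv]
        all_goals ac_rfl
      exact hne1 _ key
    · exfalso
      have key : ρ.r (C.w 1) * ρ.r (C.w 3) = 1 := by
        rw [← hv]
        all_goals ac_rfl
      exact hne2 _ _ (C.hwinj.ne (by decide : (1:Fin 5) ≠ 3)) key
    · exfalso
      have key : ρ.r (C.w 1) * ρ.r (C.w 2) = 1 := by
        rw [← hv]
        all_goals ac_rfl
      exact hne2 _ _ (C.hwinj.ne (by decide : (1:Fin 5) ≠ 2)) key
    · exfalso
      have key : ρ.r (C.w 4) * ρ.r (C.w 0) = 1 := by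
        rw [hw4]
        rw [show ρ.r (C.w 0) * ρ.r (C.w 1) * ρ.r (C.w 2) * ρ.r (C.w 3) * ρ.r (C.w 0) = (ρ.r (C.w 0) * ρ.r (C.w 0)) * (ρ.r (C.w 1) * ρ.r (C.w 2) * ρ.r (C.w 3)) from by ac_rfl, hsq (C.w 0), one_mul]
        rw [← hv]
        all_goals ac_rfl
      exact hne2 _ _ (C.hwinj.ne (by decide : (4:Fin 5) ≠ 0)) key
    · exfalso
      have key : ρ.r (C.w 0) = 1 := by
        rw [← hv]
        all_goals ac_rfl
      exact hne1 _ key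
    · exfalso
      have key : ρ.r (C.w 0) * ρ.r (C.w 3) = 1 := by
        rw [← hv]
        all_goals ac_rfl
      exact hne2 _ _ (C.hwinj.ne (by decide : (0:Fin 5) ≠ 3)) key
    · exfalso
      have key : ρ.r (C.w 0) * ρ.r (C.w 2) = 1 := by
        rw [← hv]
        all_goals ac_rfl
      exact hne2 _ _ (C.hwinj.ne (by decide : (0:Fin 5) ≠ 2)) key
    · exfalso
      have key : ρ.r (C.w 4) * ρ.r (C.w 1) = 1 := by
        rw [hw4]
        rw [show ρ.r (C.w 0) * ρ.r (C.w 1) * ρ.r (C.w 2) * ρ.r (C.w 3) * ρ.r (C.w 1) = (ρ.r (C.w 1) * ρ.r (C.w 1)) * (ρ.r (C.w 0) * ρ.r (C.w 2) * ρ.r (C.w 3)) from by ac_rfl, hsq (C.w 1), one_mul]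
        rw [← hv]
        all_goals ac_rfl
      exact hne2 _ _ (C.hwinj.ne (by decide : (4:Fin 5) ≠ 1)) key
    · exfalso
      have key : ρ.r (C.w 0) * ρ.r (C.w 1) = 1 := by
        rw [← hv]
        all_goals ac_rfl
      exact hne2 _ _ (C.hwinj.ne (by decide : (0:Fin 5) ≠ 1)) key
    · exfalso
      have key : ρ.r (C.w 4) * ρ.r (C.w 2) = 1 := by
        rw [hw4]
        rw [show ρ.r (C.w 0) * ρ.r (C.w 1) * ρ.r (C.w 2) * ρ.r (C.w 3) * ρ.r (C.w 2) = (ρ.r (C.w 2) * ρ.r (C.w 2)) * (ρ.r (C.w 0) * ρ.r (C.w 1) * ρ.r (C.w 3)) from by ac_rfl, hsq (C.w 2), one_mul]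
        rw [← hv]
        all_goals ac_rfl
      exact hne2 _ _ (C.hwinj.ne (by decide : (4:Fin 5) ≠ 2)) key
    · exfalso
      have key : ρ.r (C.w 4) * ρ.r (C.w 3) = 1 := by
        rw [hw4]
        rw [show ρ.r (C.w 0) * ρ.r (C.w 1) * ρ.r (C.w 2) * ρ.r (C.w 3) * ρ.r (C.w 3) = (ρ.r (C.w 3) * ρ.r (C.w 3)) * (ρ.r (C.w 0) * ρ.r (C.w 1) * ρ.r (C.w 2)) from by ac_rfl, hsq (C.w 3), one_mul]
        rw [← hv]
        all_goals ac_rfl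
      exact hne2 _ _ (C.hwinj.ne (by decide : (4:Fin 5) ≠ 3)) key
    · exfalso
      have key : ρ.r (C.w 4) = 1 := by
        rw [hw4]
        rw [← hv]
        all_goals ac_rfl
      exact hne1 _ key
    · exfalso
      have key : ρ.r C.y = 1 := by
        rw [← hv]
        all_goals ac_rfl
      exact hne1 _ key
    · exfalso
      have key : ρ.r (C.p2 3) = 1 := by
        rw [hvp2 3]
        rw [← hv]
        all_goals ac_rfl
      exact hne1 _ key
    · exfalso
      have key : ρ.r (C.p2 2) = 1 := by
        rw [hvp2 2]
        rw [← hv]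
        all_goals ac_rfl
      exact hne1 _ key
    · exfalso
      have key : ρ.r (C.p2 2) * ρ.r (C.w 3) = 1 := by
        rw [hvp2 2]
        rw [← hv]
        all_goals ac_rfl
      exact hne2 _ _ (Ne.symm (SlimPLS.Cfg.w_ne_p2 C hGQ 3 2)) key
    · exfalso
      have key : ρ.r (C.p2 1) = 1 := by
        rw [hvp2 1]
        rw [← hv]
        all_goals ac_rfl
      exact hne1 _ key
    · exfalso
      have key : ρ.r (C.p2 1) * ρ.r (C.w 3) = 1 := by
        rw [hvp2 1]
        rw [← hv]
        all_goals ac_rfl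
      exact hne2 _ _ (Ne.symm (SlimPLS.Cfg.w_ne_p2 C hGQ 3 1)) key
    · exfalso
      have key : ρ.r (C.p2 1) * ρ.r (C.w 2) = 1 := by
        rw [hvp2 1]
        rw [← hv]
        all_goals ac_rfl
      exact hne2 _ _ (Ne.symm (SlimPLS.Cfg.w_ne_p2 C hGQ 2 1)) key
    · exfalso
      have key : ρ.r (C.p2 4) * ρ.r (C.w 0) = 1 := by
        rw [hvp2 4, hw4]
        rw [show ρ.r C.y * (ρ.r (C.w 0) * ρ.r (C.w 1) * ρ.r (C.w 2) * ρ.r (C.w 3)) * ρ.r (C.w 0) = (ρ.r (C.w 0) * ρ.r (C.w 0)) * (ρ.r C.y * ρ.r (C.w 1) * ρ.r (C.w 2) * ρ.r (C.w 3)) from by ac_rfl, hsq (C.w 0), one_mul]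
        rw [← hv]
        all_goals ac_rfl
      exact hne2 _ _ (Ne.symm (SlimPLS.Cfg.w_ne_p2 C hGQ 0 4)) key
    · exfalso
      have key : ρ.r (C.p2 0) = 1 := by
        rw [hvp2 0]
        rw [← hv]
        all_goals ac_rfl
      exact hne1 _ key
    · exfalso
      have key : ρ.r (C.p2 0) * ρ.r (C.w 3) = 1 := by
        rw [hvp2 0]
        rw [← hv]
        all_goals ac_rfl
      exact hne2 _ _ (Ne.symm (SlimPLS.Cfg.w_ne_p2 C hGQ 3 0)) key
    · exfalso
      have key : ρ.r (C.p2 0) * ρ.r (C.w 2) = 1 := by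
        rw [hvp2 0]
        rw [← hv]
        all_goals ac_rfl
      exact hne2 _ _ (Ne.symm (SlimPLS.Cfg.w_ne_p2 C hGQ 2 0)) key
    · exfalso
      have key : ρ.r (C.p2 4) * ρ.r (C.w 1) = 1 := by
        rw [hvp2 4, hw4]
        rw [show ρ.r C.y * (ρ.r (C.w 0) * ρ.r (C.w 1) * ρ.r (C.w 2) * ρ.r (C.w 3)) * ρ.r (C.w 1) = (ρ.r (C.w 1) * ρ.r (C.w 1)) * (ρ.r C.y * ρ.r (C.w 0) * ρ.r (C.w 2) * ρ.r (C.w 3)) from by ac_rfl, hsq (C.w 1), one_mul]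
        rw [← hv]
        all_goals ac_rfl
      exact hne2 _ _ (Ne.symm (SlimPLS.Cfg.w_ne_p2 C hGQ 1 4)) key
    · exfalso
      have key : ρ.r (C.p2 0) * ρ.r (C.w 1) = 1 := by
        rw [hvp2 0]
        rw [← hv]
        all_goals ac_rfl
      exact hne2 _ _ (Ne.symm (SlimPLS.Cfg.w_ne_p2 C hGQ 1 0)) key
    · exfalso
      have key : ρ.r (C.p2 4) * ρ.r (C.w 2) = 1 := by
        rw [hvp2 4, hw4]
        rw [show ρ.r C.y * (ρ.r (C.w 0) * ρ.r (C.w 1) * ρ.r (C.w 2) * ρ.r (C.w 3)) * ρ.r (C.w 2) = (ρ.r (C.w 2) * ρ.r (C.w 2)) * (ρ.r C.y * ρ.r (C.w 0) * ρ.r (C.w 1) * ρ.r (C.w 3)) from by ac_rfl, hsq (C.w 2), one_mul]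
        rw [← hv]
        all_goals ac_rfl
      exact hne2 _ _ (Ne.symm (SlimPLS.Cfg.w_ne_p2 C hGQ 2 4)) key
    · exfalso
      have key : ρ.r (C.p2 4) * ρ.r (C.w 3) = 1 := by
        rw [hvp2 4, hw4]
        rw [show ρ.r C.y * (ρ.r (C.w 0) * ρ.r (C.w 1) * ρ.r (C.w 2) * ρ.r (C.w 3)) * ρ.r (C.w 3) = (ρ.r (C.w 3) * ρ.r (C.w 3)) * (ρ.r C.y * ρ.r (C.w 0) * ρ.r (C.w 1) * ρ.r (C.w 2)) from by ac_rfl, hsq (C.w 3), one_mul]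
        rw [← hv]
        all_goals ac_rfl
      exact hne2 _ _ (Ne.symm (SlimPLS.Cfg.w_ne_p2 C hGQ 3 4)) key
    · exfalso
      have key : ρ.r (C.p2 4) = 1 := by
        rw [hvp2 4, hw4]
        rw [← hv]
        all_goals ac_rfl
      exact hne1 _ key
    · exfalso
      have key : ρ.r C.x = 1 := by
        rw [← hv]
        all_goals ac_rfl
      exact hne1 _ key
    · exfalso
      have key : ρ.r (C.p1 3) = 1 := by
        rw [hvp1 3]
        rw [← hv]
        all_goals ac_rfl
      exact hne1 _ key
    · exfalso
      have key : ρ.r (C.p1 2) = 1 := by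
        rw [hvp1 2]
        rw [← hv]
        all_goals ac_rfl
      exact hne1 _ key
    · exfalso
      have key : ρ.r (C.p1 2) * ρ.r (C.w 3) = 1 := by
        rw [hvp1 2]
        rw [← hv]
        all_goals ac_rfl
      exact hne2 _ _ (Ne.symm (SlimPLS.Cfg.w_ne_p1 C hGQ 3 2)) key
    · exfalso
      have key : ρ.r (C.p1 1) = 1 := by
        rw [hvp1 1]
        rw [← hv]
        all_goals ac_rfl
      exact hne1 _ key
    · exfalso
      have key : ρ.r (C.p1 1) * ρ.r (C.w 3) = 1 := by
        rw [hvp1 1]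
        rw [← hv]
        all_goals ac_rfl
      exact hne2 _ _ (Ne.symm (SlimPLS.Cfg.w_ne_p1 C hGQ 3 1)) key
    · exfalso
      have key : ρ.r (C.p1 1) * ρ.r (C.w 2) = 1 := by
        rw [hvp1 1]
        rw [← hv]
        all_goals ac_rfl
      exact hne2 _ _ (Ne.symm (SlimPLS.Cfg.w_ne_p1 C hGQ 2 1)) key
    · exfalso
      have key : ρ.r (C.p1 4) * ρ.r (C.w 0) = 1 := by
        rw [hvp1 4, hw4]
        rw [show ρ.r C.x * (ρ.r (C.w 0) * ρ.r (C.w 1) * ρ.r (C.w 2) * ρ.r (C.w 3)) * ρ.r (C.w 0) = (ρ.r (C.w 0) * ρ.r (C.w 0)) * (ρ.r C.x * ρ.r (C.w 1) * ρ.r (C.w 2) * ρ.r (C.w 3)) from by ac_rfl, hsq (C.w 0), one_mul]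
        rw [← hv]
        all_goals ac_rfl
      exact hne2 _ _ (Ne.symm (SlimPLS.Cfg.w_ne_p1 C hGQ 0 4)) key
    · exfalso
      have key : ρ.r (C.p1 0) = 1 := by
        rw [hvp1 0]
        rw [← hv]
        all_goals ac_rfl
      exact hne1 _ key
    · exfalso
      have key : ρ.r (C.p1 0) * ρ.r (C.w 3) = 1 := by
        rw [hvp1 0]
        rw [← hv]
        all_goals ac_rfl
      exact hne2 _ _ (Ne.symm (SlimPLS.Cfg.w_ne_p1 C hGQ 3 0)) key
    · exfalso
      have key : ρ.r (C.p1 0) * ρ.r (C.w 2) = 1 := by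
        rw [hvp1 0]
        rw [← hv]
        all_goals ac_rfl
      exact hne2 _ _ (Ne.symm (SlimPLS.Cfg.w_ne_p1 C hGQ 2 0)) key
    · exfalso
      have key : ρ.r (C.p1 4) * ρ.r (C.w 1) = 1 := by
        rw [hvp1 4, hw4]
        rw [show ρ.r C.x * (ρ.r (C.w 0) * ρ.r (C.w 1) * ρ.r (C.w 2) * ρ.r (C.w 3)) * ρ.r (C.w 1) = (ρ.r (C.w 1) * ρ.r (C.w 1)) * (ρ.r C.x * ρ.r (C.w 0) * ρ.r (C.w 2) * ρ.r (C.w 3)) from by ac_rfl, hsq (C.w 1), one_mul]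
        rw [← hv]
        all_goals ac_rfl
      exact hne2 _ _ (Ne.symm (SlimPLS.Cfg.w_ne_p1 C hGQ 1 4)) key
    · exfalso
      have key : ρ.r (C.p1 0) * ρ.r (C.w 1) = 1 := by
        rw [hvp1 0]
        rw [← hv]
        all_goals ac_rfl
      exact hne2 _ _ (Ne.symm (SlimPLS.Cfg.w_ne_p1 C hGQ 1 0)) key
    · exfalso
      have key : ρ.r (C.p1 4) * ρ.r (C.w 2) = 1 := by
        rw [hvp1 4, hw4]
        rw [show ρ.r C.x * (ρ.r (C.w 0) * ρ.r (C.w 1) * ρ.r (C.w 2) * ρ.r (C.w 3)) * ρ.r (C.w 2) = (ρ.r (C.w 2) * ρ.r (C.w 2)) * (ρ.r C.x * ρ.r (C.w 0) * ρ.r (C.w 1) * ρ.r (C.w 3)) from by ac_rfl, hsq (C.w 2), one_mul]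
        rw [← hv]
        all_goals ac_rfl
      exact hne2 _ _ (Ne.symm (SlimPLS.Cfg.w_ne_p1 C hGQ 2 4)) key
    · exfalso
      have key : ρ.r (C.p1 4) * ρ.r (C.w 3) = 1 := by
        rw [hvp1 4, hw4]
        rw [show ρ.r C.x * (ρ.r (C.w 0) * ρ.r (C.w 1) * ρ.r (C.w 2) * ρ.r (C.w 3)) * ρ.r (C.w 3) = (ρ.r (C.w 3) * ρ.r (C.w 3)) * (ρ.r C.x * ρ.r (C.w 0) * ρ.r (C.w 1) * ρ.r (C.w 2)) from by ac_rfl, hsq (C.w 3), one_mul]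
        rw [← hv]
        all_goals ac_rfl
      exact hne2 _ _ (Ne.symm (SlimPLS.Cfg.w_ne_p1 C hGQ 3 4)) key
    · exfalso
      have key : ρ.r (C.p1 4) = 1 := by
        rw [hvp1 4, hw4]
        rw [← hv]
        all_goals ac_rfl
      exact hne1 _ key
    · exfalso
      have key : ρ.r C.x * ρ.r C.y = 1 := by
        rw [← hv]
        all_goals ac_rfl
      exact hne2 _ _ C.hne key
    · exfalso
      have key : ρ.r (C.p1 3) * ρ.r C.y = 1 := by
        rw [hvp1 3]
        rw [← hv]
        all_goals ac_rfl
      exact hne2 _ _ (Ne.symm (SlimPLS.Cfg.y_ne_p1 C 3)) key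
    · exfalso
      have key : ρ.r (C.p1 2) * ρ.r C.y = 1 := by
        rw [hvp1 2]
        rw [← hv]
        all_goals ac_rfl
      exact hne2 _ _ (Ne.symm (SlimPLS.Cfg.y_ne_p1 C 2)) key
    · exfalso
      have key : ρ.r (C.q 2 3) = 1 := by
        rw [hvq 2 3 (by decide)]
        rw [← hv]
        all_goals ac_rfl
      exact hne1 _ key
    · exfalso
      have key : ρ.r (C.p1 1) * ρ.r C.y = 1 := by
        rw [hvp1 1]
        rw [← hv]
        all_goals ac_rfl
      exact hne2 _ _ (Ne.symm (SlimPLS.Cfg.y_ne_p1 C 1)) key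
    · exfalso
      have key : ρ.r (C.q 1 3) = 1 := by
        rw [hvq 1 3 (by decide)]
        rw [← hv]
        all_goals ac_rfl
      exact hne1 _ key
    · exfalso
      have key : ρ.r (C.q 1 2) = 1 := by
        rw [hvq 1 2 (by decide)]
        rw [← hv]
        all_goals ac_rfl
      exact hne1 _ key
    · exfalso
      have key : ρ.r (C.q 0 4) = 1 := by
        rw [hvq 0 4 (by decide), hw4]
        rw [show ρ.r C.x * ρ.r (C.w 0) * (ρ.r C.y * (ρ.r (C.w 0) * ρ.r (C.w 1) * ρ.r (C.w 2) * ρ.r (C.w 3))) = (ρ.r (C.w 0) * ρ.r (C.w 0)) * (ρ.r C.x * ρ.r C.y * ρ.r (C.w 1) * ρ.r (C.w 2) * ρ.r (C.w 3)) from by ac_rfl, hsq (C.w 0), one_mul]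
        rw [← hv]
        all_goals ac_rfl
      exact hne1 _ key
    · exfalso
      have key : ρ.r (C.p1 0) * ρ.r C.y = 1 := by
        rw [hvp1 0]
        rw [← hv]
        all_goals ac_rfl
      exact hne2 _ _ (Ne.symm (SlimPLS.Cfg.y_ne_p1 C 0)) key
    · exfalso
      have key : ρ.r (C.q 0 3) = 1 := by
        rw [hvq 0 3 (by decide)]
        rw [← hv]
        all_goals ac_rfl
      exact hne1 _ key
    · exfalso
      have key : ρ.r (C.q 0 2) = 1 := by
        rw [hvq 0 2 (by decide)]
        rw [← hv]
        all_goals ac_rfl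
      exact hne1 _ key
    · exfalso
      have key : ρ.r (C.q 1 4) = 1 := by
        rw [hvq 1 4 (by decide), hw4]
        rw [show ρ.r C.x * ρ.r (C.w 1) * (ρ.r C.y * (ρ.r (C.w 0) * ρ.r (C.w 1) * ρ.r (C.w 2) * ρ.r (C.w 3))) = (ρ.r (C.w 1) * ρ.r (C.w 1)) * (ρ.r C.x * ρ.r C.y * ρ.r (C.w 0) * ρ.r (C.w 2) * ρ.r (C.w 3)) from by ac_rfl, hsq (C.w 1), one_mul]
        rw [← hv]
        all_goals ac_rfl
      exact hne1 _ key
    · exfalso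
      have key : ρ.r (C.q 0 1) = 1 := by
        rw [hvq 0 1 (by decide)]
        rw [← hv]
        all_goals ac_rfl
      exact hne1 _ key
    · exfalso
      have key : ρ.r (C.q 2 4) = 1 := by
        rw [hvq 2 4 (by decide), hw4]
        rw [show ρ.r C.x * ρ.r (C.w 2) * (ρ.r C.y * (ρ.r (C.w 0) * ρ.r (C.w 1) * ρ.r (C.w 2) * ρ.r (C.w 3))) = (ρ.r (C.w 2) * ρ.r (C.w 2)) * (ρ.r C.x * ρ.r C.y * ρ.r (C.w 0) * ρ.r (C.w 1) * ρ.r (C.w 3)) from by ac_rfl, hsq (C.w 2), one_mul]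
        rw [← hv]
        all_goals ac_rfl
      exact hne1 _ key
    · exfalso
      have key : ρ.r (C.q 3 4) = 1 := by
        rw [hvq 3 4 (by decide), hw4]
        rw [show ρ.r C.x * ρ.r (C.w 3) * (ρ.r C.y * (ρ.r (C.w 0) * ρ.r (C.w 1) * ρ.r (C.w 2) * ρ.r (C.w 3))) = (ρ.r (C.w 3) * ρ.r (C.w 3)) * (ρ.r C.x * ρ.r C.y * ρ.r (C.w 0) * ρ.r (C.w 1) * ρ.r (C.w 2)) from by ac_rfl, hsq (C.w 3), one_mul]
        rw [← hv]
        all_goals ac_rfl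
      exact hne1 _ key
    · exfalso
      have key : ρ.r (C.q 0 4) * ρ.r (C.w 0) = 1 := by
        rw [hvq 0 4 (by decide), hw4]
        rw [show ρ.r C.x * ρ.r (C.w 0) * (ρ.r C.y * (ρ.r (C.w 0) * ρ.r (C.w 1) * ρ.r (C.w 2) * ρ.r (C.w 3))) * ρ.r (C.w 0) = (ρ.r (C.w 0) * ρ.r (C.w 0)) * (ρ.r C.x * ρ.r C.y * ρ.r (C.w 0) * ρ.r (C.w 1) * ρ.r (C.w 2) * ρ.r (C.w 3)) from by ac_rfl, hsq (C.w 0), one_mul]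
        rw [← hv]
        all_goals ac_rfl
      exact hne2 _ _ (SlimPLS.Cfg.q_ne_w C hGQ (by decide) 0) key
  have hinj : Function.Injective φ := by
    rw [injective_iff_map_eq_one]
    intro c hc
    have h0 := hker (Multiplicative.toAdd c) hc
    exact congrArg Multiplicative.ofAdd h0
  have hsurj : Function.Surjective φ := by
    intro r
    obtain ⟨c, hc⟩ := hrange r
    exact ⟨c, hc⟩
  have hcard := Nat.card_eq_of_bijective φ ⟨hinj, hsurj⟩
  rw [← hcard, Nat.card_eq_fintype_card,
    show Fintype.card (Multiplicative (Fin 6 → ZMod 2)) = Fintype.card (Fin 6 → ZMod 2) from rfl]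
  simp
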